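/- arXiv:1702.06479 — 4 statements merged into one kernel-verified Lean document; each statement's English description precedes it below -/
import Mathlib

section
/- There exists a continuous function γ : [0,b] → 𝒳 such that for every x ∈ [0,b], θ·γ(x) = x and ĥ·γ(x) = h(x) (that is, γ(x) is a minimizer in the definition of h(x)); moreover γ(0) = 0 and γ(b) = b̂. -/
open Finset Set

lemma clampadd (x T B : ℝ) (hT : 0 ≤ T) (hB : 0 ≤ B) :
    max 0 (min (x - T) B) + max 0 (min x T) = max 0 (min x (T + B)) := by
  simp only [min_def, max_def]
  split_ifs <;> linarith

lemma clampsum (M : ℝ → ℝ) (x : ℝ) : ∀ s : Finset ℝ, (∀ v ∈ s, 0 ≤ M v) →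
    ∑ v ∈ s, max 0 (min (x - ∑ w ∈ s.filter (· < v), M w) (M v))
      = max 0 (min x (∑ v ∈ s, M v)) := by
  intro s
  induction s using Finset.induction_on_max with
  | empty => simp
  | insert a t hlt ih =>
    intro hM
    have hat : a ∉ t := fun h => lt_irrefl a (hlt a h)
    have h1 : ∀ v ∈ t, (insert a t).filter (· < v) = t.filter (· < v) := by
      intro v hv
      ext w
      simp only [Finset.mem_filter, Finset.mem_insert]
      constructor
      · rintro ⟨rfl | hw, hwv⟩
        · exact absurd hwv (not_lt.mpr (hlt v hv).le)
        · exact ⟨hw, hwv⟩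
      · rintro ⟨hw, hwv⟩; exact ⟨Or.inr hw, hwv⟩
    have h2 : (insert a t).filter (· < a) = t := by
      ext w
      simp only [Finset.mem_filter, Finset.mem_insert]
      constructor
      · rintro ⟨rfl | hw, hwa⟩
        · exact absurd hwa (lt_irrefl _)
        · exact hw
      · intro hw; exact ⟨Or.inr hw, hlt w hw⟩
    have hT : 0 ≤ ∑ v ∈ t, M v :=
      Finset.sum_nonneg fun v hv => hM v (Finset.mem_insert_of_mem hv)
    have step1 : ∑ v ∈ t, max 0 (min (x - ∑ w ∈ (insert a t).filter (· < v), M w) (M v))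
        = ∑ v ∈ t, max 0 (min (x - ∑ w ∈ t.filter (· < v), M w) (M v)) :=
      Finset.sum_congr rfl fun v hv => by rw [h1 v hv]
    rw [Finset.sum_insert hat, Finset.sum_insert hat, h2, step1,
      ih (fun v hv => hM v (Finset.mem_insert_of_mem hv)),
      clampadd x (∑ v ∈ t, M v) (M a) hT (hM a (Finset.mem_insert_self a t)),
      add_comm (∑ v ∈ t, M v) (M a)]

/-- There exists a continuous function γ : [0,b] → 𝒳 such that for every
x ∈ [0,b], θ·γ(x) = x and ĥ·γ(x) = h(x) (γ(x) is a minimizer in the definition of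
h(x)); moreover γ(0) = 0 and γ(b) = b̂. -/
theorem stmt6 (I : ℕ) (hI : 1 ≤ I) (hhat rhat mu bhat : Fin I → ℝ)
    (hhhat : ∀ i, 0 < hhat i) (hrhat : ∀ i, 0 < rhat i)
    (hmu : ∀ i, 0 < mu i) (hbhat : ∀ i, 0 < bhat i)
    (θ : Fin I → ℝ) (hθ : ∀ i, θ i = 1 / mu i)
    (b : ℝ) (hb : b = ∑ i, θ i * bhat i)
    (h : ℝ → ℝ)
    (hdef : ∀ x ∈ Icc (0:ℝ) b, IsLeast
      {y : ℝ | ∃ ξ : Fin I → ℝ, (∀ i, ξ i ∈ Icc (0:ℝ) (bhat i)) ∧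
        (∑ i, θ i * ξ i) = x ∧ y = ∑ i, hhat i * ξ i} (h x)) :
    ∃ γ : ℝ → (Fin I → ℝ), ContinuousOn γ (Icc (0:ℝ) b) ∧
      (∀ x ∈ Icc (0:ℝ) b, (∀ i, γ x i ∈ Icc (0:ℝ) (bhat i)) ∧
        (∑ i, θ i * γ x i) = x ∧ (∑ i, hhat i * γ x i) = h x) ∧
      γ 0 = 0 ∧ γ b = bhat := by
  classical
  have hθpos : ∀ i, 0 < θ i := by intro i; rw [hθ]; exact one_div_pos.mpr (hmu i)
  set d : Fin I → ℝ := fun i => hhat i / θ i with hd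
  set A : Fin I → ℝ := fun i => ∑ j ∈ univ.filter (fun j => d j < d i), θ j * bhat j with hA
  set B : Fin I → ℝ := fun i => ∑ j ∈ univ.filter (fun j => d j = d i), θ j * bhat j with hB
  have hBpos : ∀ i, 0 < B i := by
    intro i
    apply Finset.sum_pos (fun j _ => mul_pos (hθpos j) (hbhat j))
    exact ⟨i, by simp⟩
  have hA0 : ∀ i, 0 ≤ A i :=
    fun i => Finset.sum_nonneg fun j _ => (mul_pos (hθpos j) (hbhat j)).le
  -- A i + B i = sum over {j : d j ≤ d i}
  have hABsum : ∀ i, A i + B i = ∑ j ∈ univ.filter (fun j => d j ≤ d i), θ j * bhat j := by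
    intro i
    rw [hA, hB, ← Finset.sum_union]
    · apply Finset.sum_congr _ (fun _ _ => rfl)
      ext j; simp [lt_or_eq_of_le, le_iff_lt_or_eq]
    · rw [Finset.disjoint_filter]
      intro j _ hlt heq
      exact absurd heq (ne_of_lt hlt)
  have hAB : ∀ i j, d i < d j → A i + B i ≤ A j := by
    intro i j hij
    rw [hABsum i, hA]
    apply Finset.sum_le_sum_of_subset_of_nonneg
    · intro k hk
      simp only [Finset.mem_filter, Finset.mem_univ, true_and] at hk ⊢
      exact lt_of_le_of_lt hk hij
    · exact fun k _ _ => (mul_pos (hθpos k) (hbhat k)).le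
  have hABb : ∀ i, A i + B i ≤ b := by
    intro i
    rw [hABsum i, hb]
    apply Finset.sum_le_sum_of_subset_of_nonneg (Finset.filter_subset _ _)
    exact fun k _ _ => (mul_pos (hθpos k) (hbhat k)).le
  set γ : ℝ → Fin I → ℝ := fun x i => bhat i * max 0 (min ((x - A i) / B i) 1) with hγ
  have hγ0 : ∀ x i, 0 ≤ γ x i :=
    fun x i => mul_nonneg (hbhat i).le (le_max_left 0 _)
  have hγle : ∀ x i, γ x i ≤ bhat i := by
    intro x i
    have : max 0 (min ((x - A i) / B i) 1) ≤ 1 :=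
      max_le zero_le_one (min_le_right _ _)
    calc γ x i ≤ bhat i * 1 := mul_le_mul_of_nonneg_left this (hbhat i).le
    _ = bhat i := mul_one _
  have hγfull : ∀ x i, A i + B i ≤ x → γ x i = bhat i := by
    intro x i hx
    have h1 : (1:ℝ) ≤ (x - A i) / B i := (one_le_div (hBpos i)).mpr (by linarith)
    rw [hγ]
    simp only [min_eq_right h1, max_eq_right zero_le_one, mul_one]
  have hγzero : ∀ x i, x ≤ A i → γ x i = 0 := by
    intro x i hx
    have h1 : (x - A i) / B i ≤ 0 := by
      rw [div_nonpos_iff]; right; exact ⟨by linarith, (hBpos i).le⟩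
    show bhat i * max 0 (min ((x - A i) / B i) 1) = 0
    rw [min_eq_left (h1.trans zero_le_one), max_eq_left h1, mul_zero]
  -- workload identity
  have hwork : ∀ x, ∑ i, θ i * γ x i = max 0 (min x b) := by
    intro x
    set M : ℝ → ℝ := fun v => ∑ j ∈ univ.filter (fun j => d j = v), θ j * bhat j with hM
    have hMnn : ∀ v, 0 ≤ M v := fun v =>
      Finset.sum_nonneg fun j _ => (mul_pos (hθpos j) (hbhat j)).le
    have hAfib : ∀ v : ℝ, ∑ w ∈ ((Finset.univ.image d).filter (· < v)), M w
        = ∑ j ∈ univ.filter (fun j => d j < v), θ j * bhat j := by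
      intro v
      rw [← Finset.sum_fiberwise_of_maps_to (g := d)
        (t := (Finset.univ.image d).filter (· < v))
        (fun j hj => by
          rw [Finset.mem_filter] at hj ⊢
          exact ⟨Finset.mem_image_of_mem d (Finset.mem_univ j), hj.2⟩)
        (fun j => θ j * bhat j)]
      apply Finset.sum_congr rfl
      intro w hw
      rw [Finset.mem_filter] at hw
      apply Finset.sum_congr _ (fun _ _ => rfl)
      ext j
      simp only [Finset.mem_filter, Finset.mem_univ, true_and]
      constructor
      · intro hj
        exact ⟨by rw [hj]; exact hw.2, hj⟩
      · exact fun hj => hj.2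
    have huniv : ∑ v ∈ Finset.univ.image d, M v = b := by
      rw [hb]
      exact Finset.sum_fiberwise_of_maps_to
        (fun i _ => Finset.mem_image_of_mem d (Finset.mem_univ i)) _
    have hfib : ∑ i, θ i * γ x i
        = ∑ v ∈ Finset.univ.image d, ∑ i ∈ univ.filter (fun i => d i = v), θ i * γ x i :=
      (Finset.sum_fiberwise_of_maps_to
        (fun i _ => Finset.mem_image_of_mem d (Finset.mem_univ i)) _).symm
    have hinner : ∀ v ∈ Finset.univ.image d,
        ∑ i ∈ univ.filter (fun i => d i = v), θ i * γ x i
        = max 0 (min (x - ∑ w ∈ ((Finset.univ.image d).filter (· < v)), M w) (M v)) := by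
      intro v hv
      obtain ⟨i₀, _, hi₀⟩ := Finset.mem_image.mp hv
      have hMv : 0 < M v := by
        apply Finset.sum_pos (fun j _ => mul_pos (hθpos j) (hbhat j))
        exact ⟨i₀, by simp [hi₀]⟩
      set A₀ : ℝ := ∑ j ∈ univ.filter (fun j => d j < v), θ j * bhat j with hA₀
      have hterm : ∀ i ∈ univ.filter (fun i => d i = v),
          θ i * γ x i = (θ i * bhat i) * max 0 (min ((x - A₀) / M v) 1) := by
        intro i hi
        rw [Finset.mem_filter] at hi
        have hAi : A i = A₀ := by
          show ∑ j ∈ univ.filter (fun j => d j < d i), θ j * bhat j = A₀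
          rw [hi.2]
        have hBi : B i = M v := by
          show ∑ j ∈ univ.filter (fun j => d j = d i), θ j * bhat j = M v
          rw [hi.2]
        show θ i * (bhat i * max 0 (min ((x - A i) / B i) 1)) = _
        rw [hAi, hBi, mul_assoc]
      rw [Finset.sum_congr rfl hterm, ← Finset.sum_mul, hAfib v, ← hA₀]
      have hsumfib : ∑ i ∈ univ.filter (fun i => d i = v), θ i * bhat i = M v := rfl
      rw [hsumfib, mul_max_of_nonneg _ _ hMv.le, mul_min_of_nonneg _ _ hMv.le,
        mul_zero, mul_one, mul_div_cancel₀ _ hMv.ne']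
    rw [hfib, Finset.sum_congr rfl hinner,
      clampsum M x (Finset.univ.image d) (fun v _ => hMnn v), huniv]
  -- structure fact
  have hstep : ∀ x i j, d i < d j → 0 < γ x j → γ x i = bhat i := by
    intro x i j hdij hpos
    have hγj : γ x j = bhat j * max 0 (min ((x - A j) / B j) 1) := rfl
    have hclamp : 0 < max 0 (min ((x - A j) / B j) 1) := by
      by_contra hc
      push_neg at hc
      rw [hγj] at hpos
      nlinarith [hbhat j]
    have hxA : A j < x := by
      rcases lt_or_ge (A j) x with h' | h'
      · exact h'
      · exfalso
        have h1 : (x - A j) / B j ≤ 0 := by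
          rw [div_nonpos_iff]; right; exact ⟨by linarith, (hBpos j).le⟩
        rw [min_eq_left (h1.trans zero_le_one), max_eq_left h1] at hclamp
        exact lt_irrefl 0 hclamp
      
    exact hγfull x i (le_of_lt (lt_of_le_of_lt (hAB i j hdij) hxA))
  -- optimality
  have hopt : ∀ x ∈ Icc (0:ℝ) b, ∀ ξ : Fin I → ℝ, (∀ i, ξ i ∈ Icc (0:ℝ) (bhat i)) →
      (∑ i, θ i * ξ i) = x → ∑ i, hhat i * γ x i ≤ ∑ i, hhat i * ξ i := by
    intro x hx ξ hξ hξx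
    obtain ⟨l, hl1, hl2⟩ : ∃ l : ℝ, (∀ i, d i < l → γ x i = bhat i) ∧
        (∀ i, l < d i → γ x i = 0) := by
      by_cases hS : (univ.filter fun j => γ x j < bhat j).Nonempty
      · obtain ⟨j₀, hj₀, hmin⟩ := Finset.exists_min_image _ d hS
        rw [Finset.mem_filter] at hj₀
        refine ⟨d j₀, ?_, ?_⟩
        · intro i hi
          by_contra hne
          have hmem : i ∈ univ.filter fun j => γ x j < bhat j := by
            rw [Finset.mem_filter]
            exact ⟨Finset.mem_univ i, lt_of_le_of_ne (hγle x i) hne⟩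
          exact absurd hi (not_lt.mpr (hmin i hmem))
        · intro i hi
          by_contra hne
          have hpos : 0 < γ x i := lt_of_le_of_ne (hγ0 x i) (Ne.symm hne)
          exact absurd (hstep x j₀ i hi hpos) (ne_of_lt hj₀.2)
      · rw [Finset.not_nonempty_iff_eq_empty, Finset.filter_eq_empty_iff] at hS
        refine ⟨1 + ∑ j, |d j|, ?_, ?_⟩
        · intro i _
          exact le_antisymm (hγle x i) (not_lt.mp (hS (Finset.mem_univ i)))
        · intro i hi
          exfalso
          have h1 : d i ≤ ∑ j, |d j| := le_trans (le_abs_self _)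
            (Finset.single_le_sum (fun j _ => abs_nonneg (d j)) (Finset.mem_univ i))
          linarith
    have key : ∀ i ∈ (univ : Finset (Fin I)), 0 ≤ (hhat i - l * θ i) * (ξ i - γ x i) := by
      intro i _
      rcases lt_trichotomy (d i) l with hc | hc | hc
      · have hγi := hl1 i hc
        have hξi := (hξ i).2
        have hlt : hhat i < l * θ i := by
          have hc' : hhat i / θ i < l := hc
          exact (div_lt_iff₀ (hθpos i)).mp hc'
        nlinarith [hθpos i]
      · have heq : hhat i = l * θ i := by
          rw [← hc]
          show hhat i = hhat i / θ i * θ i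
          rw [div_mul_cancel₀ _ (hθpos i).ne']
        rw [heq, sub_self, zero_mul]
      · have hγi := hl2 i hc
        have hξi := (hξ i).1
        have hlt : l * θ i < hhat i := by
          have hc' : l < hhat i / θ i := hc
          exact (lt_div_iff₀ (hθpos i)).mp hc'
        nlinarith [hθpos i]
    have hsum := Finset.sum_nonneg key
    have expand : ∀ i ∈ (univ : Finset (Fin I)), (hhat i - l * θ i) * (ξ i - γ x i)
        = hhat i * ξ i - hhat i * γ x i - (l * (θ i * ξ i) - l * (θ i * γ x i)) :=
      fun i _ => by ring
    rw [Finset.sum_congr rfl expand, Finset.sum_sub_distrib, Finset.sum_sub_distrib,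
      Finset.sum_sub_distrib, ← Finset.mul_sum, ← Finset.mul_sum] at hsum
    have hγx : ∑ i, θ i * γ x i = x := by
      rw [hwork x, min_eq_left hx.2, max_eq_right hx.1]
    rw [hξx, hγx] at hsum
    linarith
  refine ⟨γ, ?_, ?_, ?_, ?_⟩
  · apply Continuous.continuousOn
    apply continuous_pi
    intro i
    exact continuous_const.mul (continuous_const.max
      (((continuous_id.sub continuous_const).div_const (B i)).min continuous_const))
  · intro x hx
    have hwx : ∑ i, θ i * γ x i = x := by
      rw [hwork x, min_eq_left hx.2, max_eq_right hx.1]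
    refine ⟨fun i => ⟨hγ0 x i, hγle x i⟩, hwx, ?_⟩
    obtain ⟨⟨ξ, hfeas, hwl, hval⟩, hlb⟩ := hdef x hx
    refine le_antisymm ?_ (hlb ⟨γ x, fun i => ⟨hγ0 x i, hγle x i⟩, hwx, rfl⟩)
    rw [hval]
    exact hopt x hx ξ hfeas hwl
  · funext i
    rw [hγzero 0 i (hA0 i)]
    rfl
  · funext i
    exact hγfull b i (hABb i)
end

section
/- Assume h is continuous. Then HJB(ε) admits at most one C² solution: if f₁ and f₂ are both C² solutions of HJB(ε), then f₁(x) = f₂(x) for every x ∈ [0,b]. -/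
open Set Topology Filter

/-- The Hamiltonian H(x,y,z) = (2/σ²)(m·z + ½σ²ε·z² − ϱ·y + h(x)). -/
noncomputable def Hfun (σ ϱ m ε : ℝ) (h : ℝ → ℝ) (x y z : ℝ) : ℝ :=
  (2 / σ ^ 2) * (m * z + (1 / 2) * σ ^ 2 * ε * z ^ 2 - ϱ * y + h x)

/-- f (with first and second derivatives f', f'') is a C² solution of HJB(ε):
min{f'' + H(x,f,f'), f', r − f'} = 0 on (0,b), f'(0) = 0, f'(b) = r. -/
def IsHJBSolution (b σ ϱ r m ε : ℝ) (h f f' f'' : ℝ → ℝ) : Prop :=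
  (∀ x ∈ Icc (0:ℝ) b, HasDerivWithinAt f (f' x) (Icc (0:ℝ) b) x) ∧
  (∀ x ∈ Icc (0:ℝ) b, HasDerivWithinAt f' (f'' x) (Icc (0:ℝ) b) x) ∧
  ContinuousOn f'' (Icc (0:ℝ) b) ∧
  (∀ x ∈ Ioo (0:ℝ) b,
    min (min (f'' x + Hfun σ ϱ m ε h x (f x) (f' x)) (f' x)) (r - f' x) = 0) ∧
  f' 0 = 0 ∧ f' b = r

noncomputable def Afun (σ ϱ m ε : ℝ) (h f f' f'' : ℝ → ℝ) (x : ℝ) : ℝ :=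
  f'' x + Hfun σ ϱ m ε h x (f x) (f' x)
lemma min3_nonneg {a p q : ℝ} (h : min (min a p) q = 0) : 0 ≤ a ∧ 0 ≤ p ∧ 0 ≤ q := by
  refine ⟨?_, ?_, ?_⟩ <;> rw [← h]
  · exact (min_le_left _ _).trans (min_le_left _ _)
  · exact (min_le_left _ _).trans (min_le_right _ _)
  · exact min_le_right _ _

lemma min3_cases {a p q : ℝ} (h : min (min a p) q = 0) (ha : 0 < a) : p = 0 ∨ q = 0 := by
  obtain ⟨_, hp, hq⟩ := min3_nonneg h
  by_contra hc
  push_neg at hc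
  have : 0 < min (min a p) q :=
    lt_min (lt_min ha (hp.lt_of_ne' hc.1)) (hq.lt_of_ne' hc.2)
  linarith [h ▸ this]

lemma mono_aux {a c : ℝ} {φ φ' : ℝ → ℝ}
    (hd : ∀ x ∈ Icc a c, HasDerivWithinAt φ (φ' x) (Icc a c) x)
    (h0 : ∀ x ∈ Icc a c, 0 ≤ φ' x) : MonotoneOn φ (Icc a c) := by
  apply monotoneOn_of_hasDerivWithinAt_nonneg (convex_Icc a c)
    (fun x hx => (hd x hx).continuousWithinAt)
    (fun x hx => (hd x (interior_subset hx)).mono interior_subset)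
    (fun x hx => h0 x (interior_subset hx))

lemma const_aux {a c : ℝ} {φ φ' : ℝ → ℝ}
    (hd : ∀ x ∈ Icc a c, HasDerivWithinAt φ (φ' x) (Icc a c) x)
    (h0 : ∀ x ∈ Icc a c, φ' x = 0) : ∀ x ∈ Icc a c, ∀ y ∈ Icc a c, φ x = φ y := by
  have h1 : MonotoneOn φ (Icc a c) := mono_aux hd (fun x hx => (h0 x hx).ge)
  have h2 : MonotoneOn (fun x => -φ x) (Icc a c) :=
    mono_aux (fun x hx => (hd x hx).neg) (fun x hx => by simp [h0 x hx])
  intro x hx y hy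
  rcases le_total x y with hxy | hxy
  · exact le_antisymm (h1 hx hy hxy) (by simpa using h2 hx hy hxy)
  · exact le_antisymm (by simpa using h2 hy hx hxy) (h1 hy hx hxy)

lemma cont_pos_nbhd {A : ℝ → ℝ} {s : Set ℝ} (hc : ContinuousOn A s) {x : ℝ} (hx : x ∈ s)
    (hpos : 0 < A x) : ∃ δ > 0, ∀ y ∈ s, |y - x| < δ → 0 < A y := by
  have h1 : A ⁻¹' (Ioi 0) ∈ 𝓝[s] x := (hc x hx) (Ioi_mem_nhds hpos)
  rw [Metric.mem_nhdsWithin_iff] at h1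
  obtain ⟨δ, hδ, hsub⟩ := h1
  exact ⟨δ, hδ, fun y hy hdy => hsub ⟨by simpa [Real.dist_eq] using hdy, hy⟩⟩

lemma const_of_two_values_left {a c r : ℝ} (hr : 0 < r) {φ : ℝ → ℝ}
    (hφ : ContinuousOn φ (Icc a c)) (hvals : ∀ y ∈ Icc a c, φ y = 0 ∨ φ y = r)
    (h0 : φ a = 0) : ∀ y ∈ Icc a c, φ y = 0 := by
  intro y hy
  rcases hvals y hy with h | h
  · exact h
  exfalso
  have hIVT := intermediate_value_Icc hy.1 (hφ.mono (Icc_subset_Icc le_rfl hy.2))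
  have hmem : r / 2 ∈ Icc (φ a) (φ y) := by rw [h0, h]; constructor <;> linarith
  obtain ⟨z, hz, hφz⟩ := hIVT hmem
  have hzc : z ∈ Icc a c := ⟨hz.1, hz.2.trans hy.2⟩
  rcases hvals z hzc with h' | h' <;> rw [hφz] at h' <;> linarith

lemma const_of_two_values_right {a c r : ℝ} (hr : 0 < r) {φ : ℝ → ℝ}
    (hφ : ContinuousOn φ (Icc a c)) (hvals : ∀ y ∈ Icc a c, φ y = 0 ∨ φ y = r)
    (h0 : φ c = r) : ∀ y ∈ Icc a c, φ y = r := by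
  intro y hy
  rcases hvals y hy with h | h
  swap
  · exact h
  exfalso
  have hIVT := intermediate_value_Icc hy.2 (hφ.mono (Icc_subset_Icc hy.1 le_rfl))
  have hmem : r / 2 ∈ Icc (φ y) (φ c) := by rw [h0, h]; constructor <;> linarith
  obtain ⟨z, hz, hφz⟩ := hIVT hmem
  have hzc : z ∈ Icc a c := ⟨hy.1.trans hz.1, hz.2⟩
  rcases hvals z hzc with h' | h' <;> rw [hφz] at h' <;> linarith

lemma nonneg_of_closure {A : ℝ → ℝ} {b : ℝ} (hb : 0 < b) (hc : ContinuousOn A (Icc 0 b))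
    (hA : ∀ x ∈ Ioo (0:ℝ) b, 0 ≤ A x) : ∀ x ∈ Icc (0:ℝ) b, 0 ≤ A x := by
  intro x hx
  have hcl : x ∈ closure (Ioo (0:ℝ) b) := by rw [closure_Ioo hb.ne]; exact hx
  have hne : (𝓝[Ioo (0:ℝ) b] x).NeBot := mem_closure_iff_nhdsWithin_neBot.1 hcl
  have ht : Filter.Tendsto A (𝓝[Ioo (0:ℝ) b] x) (𝓝 (A x)) :=
    (hc x hx).mono Ioo_subset_Icc_self
  exact ge_of_tendsto ht (Filter.eventually_of_mem self_mem_nhdsWithin hA)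
lemma second_deriv_nonpos {b : ℝ} (hb : 0 < b) {g g' g'' : ℝ → ℝ}
    (hd : ∀ x ∈ Icc (0:ℝ) b, HasDerivWithinAt g (g' x) (Icc (0:ℝ) b) x)
    (hdd : ∀ x ∈ Icc (0:ℝ) b, HasDerivWithinAt g' (g'' x) (Icc (0:ℝ) b) x)
    (hc : ContinuousOn g'' (Icc (0:ℝ) b))
    {x₀ : ℝ} (hx₀ : x₀ ∈ Icc (0:ℝ) b) (hmax : ∀ y ∈ Icc (0:ℝ) b, g y ≤ g x₀)
    (hg' : g' x₀ = 0) : g'' x₀ ≤ 0 := by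
  by_contra hpos
  push_neg at hpos
  obtain ⟨δ, hδ, hnb⟩ : ∃ δ > 0, ∀ y ∈ Icc (0:ℝ) b, |y - x₀| < δ → 0 < g'' y := by
    have h1 : g'' ⁻¹' (Ioi 0) ∈ 𝓝[Icc (0:ℝ) b] x₀ := (hc x₀ hx₀) (Ioi_mem_nhds hpos)
    rw [Metric.mem_nhdsWithin_iff] at h1
    obtain ⟨ε, hε, hsub⟩ := h1
    exact ⟨ε, hε, fun y hy hdy => hsub ⟨by simpa [Real.dist_eq] using hdy, hy⟩⟩
  have contg : ContinuousOn g (Icc (0:ℝ) b) := fun x hx => (hd x hx).continuousWithinAt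
  have contg' : ContinuousOn g' (Icc (0:ℝ) b) := fun x hx => (hdd x hx).continuousWithinAt
  rcases lt_or_eq_of_le hx₀.2 with hlt | heq
  · -- x₀ < b : work on the right
    set e := min b (x₀ + δ / 2) with he
    have hx₀e : x₀ < e := lt_min hlt (by linarith)
    have heb : e ≤ b := min_le_left _ _
    have hsub : Icc x₀ e ⊆ Icc 0 b := Icc_subset_Icc hx₀.1 heb
    have hIooIcc : ∀ y ∈ Ioo x₀ e, y ∈ Icc (0:ℝ) b :=
      fun y hy => ⟨hx₀.1.trans hy.1.le, hy.2.le.trans heb⟩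
    have hIooNhds : ∀ y ∈ Ioo x₀ e, Icc (0:ℝ) b ∈ 𝓝 y := fun y hy =>
      Icc_mem_nhds (lt_of_le_of_lt hx₀.1 hy.1) (lt_of_lt_of_le hy.2 heb)
    have hpos'' : ∀ y ∈ Ioo x₀ e, 0 < g'' y := by
      intro y hy
      apply hnb y (hIooIcc y hy)
      rw [abs_lt]
      constructor
      · linarith [hy.1]
      · have : y < x₀ + δ / 2 := lt_of_lt_of_le hy.2 (min_le_right _ _)
        linarith
    have hmono' : StrictMonoOn g' (Icc x₀ e) := by
      apply strictMonoOn_of_deriv_pos (convex_Icc _ _) (contg'.mono hsub)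
      intro y hy
      rw [interior_Icc] at hy
      have hda : HasDerivAt g' (g'' y) y := (hdd y (hIooIcc y hy)).hasDerivAt (hIooNhds y hy)
      rw [hda.deriv]
      exact hpos'' y hy
    have hg'pos : ∀ y ∈ Ioo x₀ e, 0 < g' y := by
      intro y hy
      have := hmono' (left_mem_Icc.2 hx₀e.le) ⟨hy.1.le, hy.2.le⟩ hy.1
      rwa [hg'] at this
    have hmono : StrictMonoOn g (Icc x₀ e) := by
      apply strictMonoOn_of_deriv_pos (convex_Icc _ _) (contg.mono hsub)
      intro y hy
      rw [interior_Icc] at hy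
      have hda : HasDerivAt g (g' y) y := (hd y (hIooIcc y hy)).hasDerivAt (hIooNhds y hy)
      rw [hda.deriv]
      exact hg'pos y hy
    have : g x₀ < g e := hmono (left_mem_Icc.2 hx₀e.le) (right_mem_Icc.2 hx₀e.le) hx₀e
    exact absurd (hmax e ⟨hx₀.1.trans hx₀e.le, heb⟩) (not_le.2 this)
  · -- x₀ = b : work on the left
    set e := max 0 (x₀ - δ / 2) with he
    have h0x₀ : 0 < x₀ := heq ▸ hb
    have hex₀ : e < x₀ := max_lt h0x₀ (by linarith)
    have h0e : 0 ≤ e := le_max_left _ _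
    have hsub : Icc e x₀ ⊆ Icc 0 b := Icc_subset_Icc h0e hx₀.2
    have hIooIcc : ∀ y ∈ Ioo e x₀, y ∈ Icc (0:ℝ) b :=
      fun y hy => ⟨h0e.trans hy.1.le, hy.2.le.trans hx₀.2⟩
    have hIooNhds : ∀ y ∈ Ioo e x₀, Icc (0:ℝ) b ∈ 𝓝 y := fun y hy =>
      Icc_mem_nhds (lt_of_le_of_lt h0e hy.1) (lt_of_lt_of_le hy.2 hx₀.2)
    have hpos'' : ∀ y ∈ Ioo e x₀, 0 < g'' y := by
      intro y hy
      apply hnb y (hIooIcc y hy)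
      rw [abs_lt]
      constructor
      · have : x₀ - δ / 2 < y := lt_of_le_of_lt (le_max_right _ _) hy.1
        linarith
      · linarith [hy.2]
    have hmono' : StrictMonoOn g' (Icc e x₀) := by
      apply strictMonoOn_of_deriv_pos (convex_Icc _ _) (contg'.mono hsub)
      intro y hy
      rw [interior_Icc] at hy
      have hda : HasDerivAt g' (g'' y) y := (hdd y (hIooIcc y hy)).hasDerivAt (hIooNhds y hy)
      rw [hda.deriv]
      exact hpos'' y hy
    have hg'neg : ∀ y ∈ Ioo e x₀, g' y < 0 := by
      intro y hy
      have := hmono' ⟨hy.1.le, hy.2.le⟩ (right_mem_Icc.2 hex₀.le) hy.2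
      rwa [hg'] at this
    have hmono : StrictAntiOn g (Icc e x₀) := by
      apply strictAntiOn_of_deriv_neg (convex_Icc _ _) (contg.mono hsub)
      intro y hy
      rw [interior_Icc] at hy
      have hda : HasDerivAt g (g' y) y := (hd y (hIooIcc y hy)).hasDerivAt (hIooNhds y hy)
      rw [hda.deriv]
      exact hg'neg y hy
    have : g x₀ < g e := hmono (left_mem_Icc.2 hex₀.le) (right_mem_Icc.2 hex₀.le) hex₀
    exact absurd (hmax e ⟨h0e, hex₀.le.trans hx₀.2⟩) (not_le.2 this)

lemma hjb_le (b σ ϱ r m ε : ℝ) (hb : 0 < b) (hσ : 0 < σ) (hϱ : 0 < ϱ) (hr : 0 < r)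
    (h : ℝ → ℝ) (hcont : ContinuousOn h (Icc (0:ℝ) b))
    (f₁ f₁' f₁'' f₂ f₂' f₂'' : ℝ → ℝ)
    (hf₁ : IsHJBSolution b σ ϱ r m ε h f₁ f₁' f₁'')
    (hf₂ : IsHJBSolution b σ ϱ r m ε h f₂ f₂' f₂'') :
    ∀ x ∈ Icc (0:ℝ) b, f₁ x ≤ f₂ x := by
  obtain ⟨hd₁, hdd₁, hcc₁, hmin₁, h01, hb1⟩ := hf₁
  obtain ⟨hd₂, hdd₂, hcc₂, hmin₂, h02, hb2⟩ := hf₂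
  have hmin₁' : ∀ x ∈ Ioo (0:ℝ) b,
      min (min (Afun σ ϱ m ε h f₁ f₁' f₁'' x) (f₁' x)) (r - f₁' x) = 0 := hmin₁
  have hmin₂' : ∀ x ∈ Ioo (0:ℝ) b,
      min (min (Afun σ ϱ m ε h f₂ f₂' f₂'' x) (f₂' x)) (r - f₂' x) = 0 := hmin₂
  set A₁ := Afun σ ϱ m ε h f₁ f₁' f₁'' with hA₁def
  set A₂ := Afun σ ϱ m ε h f₂ f₂' f₂'' with hA₂def
  set g : ℝ → ℝ := fun x => f₁ x - f₂ x with hgdef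
  by_contra hcon
  push_neg at hcon
  obtain ⟨w, hw, hgw⟩ := hcon
  -- continuity facts
  have cf₁ : ContinuousOn f₁ (Icc 0 b) := fun x hx => (hd₁ x hx).continuousWithinAt
  have cf₂ : ContinuousOn f₂ (Icc 0 b) := fun x hx => (hd₂ x hx).continuousWithinAt
  have cf₁' : ContinuousOn f₁' (Icc 0 b) := fun x hx => (hdd₁ x hx).continuousWithinAt
  have cf₂' : ContinuousOn f₂' (Icc 0 b) := fun x hx => (hdd₂ x hx).continuousWithinAt
  have cA₁ : ContinuousOn A₁ (Icc 0 b) := by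
    simp only [hA₁def, Afun, Hfun]
    exact hcc₁.add (continuousOn_const.mul
      ((((continuousOn_const.mul cf₁').add
        (continuousOn_const.mul (cf₁'.pow 2))).sub (continuousOn_const.mul cf₁)).add hcont))
  have cA₂ : ContinuousOn A₂ (Icc 0 b) := by
    simp only [hA₂def, Afun, Hfun]
    exact hcc₂.add (continuousOn_const.mul
      ((((continuousOn_const.mul cf₂').add
        (continuousOn_const.mul (cf₂'.pow 2))).sub (continuousOn_const.mul cf₂)).add hcont))
  have contg : ContinuousOn g (Icc 0 b) := cf₁.sub cf₂
  -- derivative bounds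
  have bounds₁ : ∀ x ∈ Icc (0:ℝ) b, 0 ≤ f₁' x ∧ f₁' x ≤ r := by
    intro x hx
    rcases eq_or_lt_of_le hx.1 with h0 | h0
    · rw [← h0, h01]; exact ⟨le_rfl, hr.le⟩
    rcases eq_or_lt_of_le hx.2 with hb' | hb'
    · rw [hb', hb1]; exact ⟨hr.le, le_rfl⟩
    obtain ⟨_, h2, h3⟩ := min3_nonneg (hmin₁' x ⟨h0, hb'⟩)
    exact ⟨h2, by linarith⟩
  have hA₁nonneg : ∀ x ∈ Icc (0:ℝ) b, 0 ≤ A₁ x :=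
    nonneg_of_closure hb cA₁ (fun x hx => (min3_nonneg (hmin₁' x hx)).1)
  -- the key maximizer lemma
  have key : ∀ x₀ ∈ Icc (0:ℝ) b, (∀ y ∈ Icc (0:ℝ) b, g y ≤ g x₀) → 0 < g x₀ →
      0 < A₂ x₀ ∧ (f₂' x₀ = 0 ∨ f₂' x₀ = r) := by
    intro x₀ hx₀ hmax hgpos
    have hp : f₁' x₀ = f₂' x₀ := by
      rcases eq_or_lt_of_le hx₀.1 with h0 | h0
      · rw [← h0, h01, h02]
      rcases eq_or_lt_of_le hx₀.2 with hb' | hb'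
      · rw [hb', hb1, hb2]
      have hnh : Icc (0:ℝ) b ∈ 𝓝 x₀ := Icc_mem_nhds h0 hb'
      have hda : HasDerivAt g (f₁' x₀ - f₂' x₀) x₀ :=
        ((hd₁ x₀ hx₀).hasDerivAt hnh).sub ((hd₂ x₀ hx₀).hasDerivAt hnh)
      have hlm : IsLocalMax g x₀ := (isMaxOn_iff.2 hmax).isLocalMax hnh
      have := hlm.hasDerivAt_eq_zero hda
      linarith
    have hgpp : f₁'' x₀ - f₂'' x₀ ≤ 0 := by
      apply second_deriv_nonpos hb (g' := fun x => f₁' x - f₂' x)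
        (g'' := fun x => f₁'' x - f₂'' x)
        (fun x hx => (hd₁ x hx).sub (hd₂ x hx))
        (fun x hx => (hdd₁ x hx).sub (hdd₂ x hx))
        (hcc₁.sub hcc₂) hx₀ hmax
      simp [hp]
    have hσ2 : (0:ℝ) < σ ^ 2 := by positivity
    have hA2pos : 0 < A₂ x₀ := by
      have h1 : 0 ≤ A₁ x₀ := hA₁nonneg x₀ hx₀
      have hdiff : A₁ x₀ - A₂ x₀ =
          (f₁'' x₀ - f₂'' x₀) - 2 / σ ^ 2 * (ϱ * (f₁ x₀ - f₂ x₀)) := by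
        simp only [hA₁def, hA₂def, Afun, Hfun, hp]; ring
      have hc : 0 < 2 / σ ^ 2 * (ϱ * (f₁ x₀ - f₂ x₀)) := by
        have : 0 < f₁ x₀ - f₂ x₀ := hgpos
        positivity
      linarith
    refine ⟨hA2pos, ?_⟩
    rcases eq_or_lt_of_le hx₀.1 with h0 | h0
    · left; rw [← h0]; exact h02
    rcases eq_or_lt_of_le hx₀.2 with hb' | hb'
    · right; rw [hb']; exact hb2
    rcases min3_cases (hmin₂' x₀ ⟨h0, hb'⟩) hA2pos with hc | hc
    · exact Or.inl hc
    · exact Or.inr (by linarith)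
  -- maximum of g
  obtain ⟨xs, hxs, hmaxs⟩ := isCompact_Icc.exists_isMaxOn (nonempty_Icc.2 hb.le) contg
  set M := g xs with hMdef
  have hmaxs' : ∀ y ∈ Icc (0:ℝ) b, g y ≤ M := fun y hy => hmaxs hy
  have hMpos : 0 < M := lt_of_lt_of_le (sub_pos.2 hgw) (hmaxs' w hw)
  set K := Icc (0:ℝ) b ∩ g ⁻¹' {M} with hKdef
  have hKclosed : IsClosed K :=
    contg.preimage_isClosed_of_isClosed isClosed_Icc isClosed_singleton
  have hKcompact : IsCompact K :=
    isCompact_Icc.of_isClosed_subset hKclosed inter_subset_left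
  have hKne : K.Nonempty := ⟨xs, hxs, rfl⟩
  set x₁ := sSup K with hx₁def
  have hx₁K : x₁ ∈ K := hKcompact.sSup_mem hKne
  have hx₁Icc : x₁ ∈ Icc (0:ℝ) b := hx₁K.1
  have hx₁M : g x₁ = M := hx₁K.2
  have hmax₁ : ∀ y ∈ Icc (0:ℝ) b, g y ≤ g x₁ := by rw [hx₁M]; exact hmaxs'
  obtain ⟨hA2x₁, hv₁⟩ := key x₁ hx₁Icc hmax₁ (by rw [hx₁M]; exact hMpos)
  have hmemK : ∀ y ∈ Icc (0:ℝ) b, g y = M → y ≤ x₁ :=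
    fun y hy hgy => le_csSup hKcompact.bddAbove ⟨hy, hgy⟩
  have hrx : ∀ (s : Set ℝ) (y : ℝ), HasDerivWithinAt (fun x => r * x) r s y := by
    intro s y; simpa using (hasDerivWithinAt_id y s).const_mul r
  rcases hv₁ with hcase0 | hcaser
  · -- f₂' x₁ = 0 : extend the maximum to the right of x₁
    have hx₁b : x₁ < b := by
      rcases eq_or_lt_of_le hx₁Icc.2 with he | he
      · exfalso; rw [he, hb2] at hcase0; exact hr.ne' hcase0
      · exact he
    obtain ⟨δ, hδ, hnb⟩ := cont_pos_nbhd cA₂ hx₁Icc hA2x₁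
    set e := min b (x₁ + δ / 2) with he
    have hx₁e : x₁ < e := lt_min hx₁b (by linarith)
    have heb : e ≤ b := min_le_left _ _
    have hsubI : Icc x₁ e ⊆ Icc 0 b := Icc_subset_Icc hx₁Icc.1 heb
    have hApos : ∀ y ∈ Icc x₁ e, 0 < A₂ y := by
      intro y hy
      apply hnb y (hsubI hy)
      rw [abs_lt]
      constructor
      · linarith [hy.1]
      · have : y ≤ x₁ + δ / 2 := hy.2.trans (min_le_right _ _); linarith
    have hvals : ∀ y ∈ Icc x₁ e, f₂' y = 0 ∨ f₂' y = r := by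
      intro y hy
      rcases eq_or_lt_of_le (hsubI hy).2 with hyb | hyb
      · right; rw [hyb]; exact hb2
      rcases eq_or_lt_of_le (hsubI hy).1 with hy0 | hy0
      · left; rw [← hy0]; exact h02
      rcases min3_cases (hmin₂' y ⟨hy0, hyb⟩) (hApos y hy) with hc | hc
      · exact Or.inl hc
      · exact Or.inr (by linarith)
    have hzero : ∀ y ∈ Icc x₁ e, f₂' y = 0 :=
      const_of_two_values_left hr (cf₂'.mono hsubI) hvals hcase0
    have hconst := const_aux (fun y hy => (hd₂ y (hsubI hy)).mono hsubI) hzero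
    have hf₂e : f₂ e = f₂ x₁ :=
      hconst e (right_mem_Icc.2 hx₁e.le) x₁ (left_mem_Icc.2 hx₁e.le)
    have hmono₁ : MonotoneOn f₁ (Icc 0 b) := mono_aux hd₁ (fun x hx => (bounds₁ x hx).1)
    have heIcc : e ∈ Icc (0:ℝ) b := hsubI (right_mem_Icc.2 hx₁e.le)
    have hgeM : g e = M := by
      have h1 : f₁ x₁ ≤ f₁ e := hmono₁ hx₁Icc heIcc hx₁e.le
      have h4 : g e ≤ M := hmaxs' e heIcc
      have h5 : g x₁ = M := hx₁M
      simp only [hgdef] at h4 h5 ⊢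
      rw [hf₂e]
      linarith
    have := hmemK e heIcc hgeM
    linarith
  · -- f₂' x₁ = r : extend the maximum to the left
    set S := {x | x ∈ Icc (0:ℝ) x₁ ∧ ∀ y ∈ Icc x x₁, g y = M} with hSdef
    have hx₁S : x₁ ∈ S := by
      refine ⟨⟨hx₁Icc.1, le_rfl⟩, fun y hy => ?_⟩
      have : y = x₁ := le_antisymm hy.2 hy.1
      rw [this]; exact hx₁M
    have hSbdd : BddBelow S := ⟨0, fun x hx => hx.1.1⟩
    set α := sInf S with hαdef
    have hα0 : 0 ≤ α := le_csInf ⟨x₁, hx₁S⟩ (fun x hx => hx.1.1)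
    have hαx₁ : α ≤ x₁ := csInf_le hSbdd hx₁S
    have hαIcc : α ∈ Icc (0:ℝ) b := ⟨hα0, hαx₁.trans hx₁Icc.2⟩
    have hIoc : ∀ y ∈ Ioc α x₁, g y = M := by
      intro y hy
      obtain ⟨x, hxS, hxy⟩ := exists_lt_of_csInf_lt ⟨x₁, hx₁S⟩ hy.1
      exact hxS.2 y ⟨hxy.le, hy.2⟩
    have hIccM : ∀ y ∈ Icc α x₁, g y = M := by
      intro y hy
      rcases eq_or_lt_of_le hy.1 with hy' | hy'
      · rcases eq_or_lt_of_le hαx₁ with hax | hax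
        · rw [← hy', hax]; exact hx₁M
        · have hsubK : Ioc α x₁ ⊆ K := fun z hz =>
            ⟨⟨hα0.trans hz.1.le, hz.2.trans hx₁Icc.2⟩, hIoc z hz⟩
          have hclm : α ∈ closure (Ioc α x₁) := by
            rw [closure_Ioc hax.ne]; exact ⟨le_rfl, hαx₁⟩
          have hcl : α ∈ K := hKclosed.closure_subset ((closure_mono hsubK) hclm)
          rw [← hy']; exact hcl.2
      · exact hIoc y ⟨hy', hy.2⟩
    have hkey2 : ∀ y ∈ Icc α x₁, 0 < A₂ y ∧ (f₂' y = 0 ∨ f₂' y = r) := by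
      intro y hy
      have hyIcc : y ∈ Icc (0:ℝ) b := ⟨hα0.trans hy.1, hy.2.trans hx₁Icc.2⟩
      exact key y hyIcc (by rw [hIccM y hy]; exact hmaxs')
        (by rw [hIccM y hy]; exact hMpos)
    have hvalr : ∀ y ∈ Icc α x₁, f₂' y = r :=
      const_of_two_values_right hr (cf₂'.mono (Icc_subset_Icc hα0 hx₁Icc.2))
        (fun y hy => (hkey2 y hy).2) hcaser
    have hα_pos : 0 < α := by
      rcases eq_or_lt_of_le hα0 with h0 | h0
      · exfalso
        have := hvalr α (left_mem_Icc.2 hαx₁)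
        rw [← h0, h02] at this
        exact hr.ne this
      · exact h0
    have hA2α : 0 < A₂ α := (hkey2 α (left_mem_Icc.2 hαx₁)).1
    obtain ⟨δ, hδ, hnb⟩ := cont_pos_nbhd cA₂ hαIcc hA2α
    set e := max 0 (α - δ / 2) with he
    have heα : e < α := max_lt hα_pos (by linarith)
    have h0e : 0 ≤ e := le_max_left _ _
    have hsubI : Icc e α ⊆ Icc 0 b := Icc_subset_Icc h0e hαIcc.2
    have hApos : ∀ y ∈ Icc e α, 0 < A₂ y := by
      intro y hy
      apply hnb y (hsubI hy)
      rw [abs_lt]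
      constructor
      · have : α - δ / 2 ≤ y := (le_max_right _ _).trans hy.1; linarith
      · linarith [hy.2]
    have hvals : ∀ y ∈ Icc e α, f₂' y = 0 ∨ f₂' y = r := by
      intro y hy
      rcases eq_or_lt_of_le (hsubI hy).1 with hy0 | hy0
      · left; rw [← hy0]; exact h02
      rcases eq_or_lt_of_le hy.2 with hyα | hyα
      · right; rw [hyα]; exact hvalr α (left_mem_Icc.2 hαx₁)
      have hyb : y < b := lt_of_lt_of_le hyα hαIcc.2
      rcases min3_cases (hmin₂' y ⟨hy0, hyb⟩) (hApos y hy) with hc | hc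
      · exact Or.inl hc
      · exact Or.inr (by linarith)
    have hvalr' : ∀ y ∈ Icc e α, f₂' y = r :=
      const_of_two_values_right hr (cf₂'.mono hsubI) hvals
        (hvalr α (left_mem_Icc.2 hαx₁))
    have hψconst := const_aux (φ := fun x => f₂ x - r * x) (φ' := fun x => f₂' x - r)
      (fun y hy => ((hd₂ y (hsubI hy)).mono hsubI).sub (hrx _ y))
      (fun y hy => by show f₂' y - r = 0; rw [hvalr' y hy]; ring)
    have hmono₂ : MonotoneOn (fun x => r * x - f₁ x) (Icc 0 b) :=
      mono_aux (φ' := fun x => r - f₁' x)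
        (fun y hy => (hrx _ y).sub (hd₁ y hy))
        (fun y hy => by show (0:ℝ) ≤ r - f₁' y; linarith [(bounds₁ y hy).2])
    have hgM : ∀ y ∈ Icc e α, g y = M := by
      intro y hy
      have h1 : r * y - f₁ y ≤ r * α - f₁ α := hmono₂ (hsubI hy) hαIcc hy.2
      have h2 : f₂ y - r * y = f₂ α - r * α :=
        hψconst y hy α (right_mem_Icc.2 heα.le)
      have h3 : g α = M := hIccM α (left_mem_Icc.2 hαx₁)
      have h4 : g y ≤ M := hmaxs' y (hsubI hy)
      simp only [hgdef] at h3 h4 ⊢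
      linarith
    have heS : e ∈ S := by
      refine ⟨⟨h0e, heα.le.trans hαx₁⟩, fun y hy => ?_⟩
      rcases le_total y α with hyα | hyα
      · exact hgM y ⟨hy.1, hyα⟩
      · exact hIccM y ⟨hyα, hy.2⟩
    have := csInf_le hSbdd heS
    linarith


/-- Assume h is continuous. Then HJB(ε) admits at most one C² solution:
if f₁ and f₂ are both C² solutions of HJB(ε), then f₁ = f₂ on [0,b]. -/
theorem stmt8 (b σ ϱ r m ε : ℝ) (hb : 0 < b) (hσ : 0 < σ) (hϱ : 0 < ϱ) (hr : 0 < r)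
    (hε : 0 ≤ ε) (h : ℝ → ℝ) (hcont : ContinuousOn h (Icc (0:ℝ) b))
    (f₁ f₁' f₁'' f₂ f₂' f₂'' : ℝ → ℝ)
    (hf₁ : IsHJBSolution b σ ϱ r m ε h f₁ f₁' f₁'')
    (hf₂ : IsHJBSolution b σ ϱ r m ε h f₂ f₂' f₂'') :
    ∀ x ∈ Icc (0:ℝ) b, f₁ x = f₂ x := by
  intro x hx
  exact le_antisymm
    (hjb_le b σ ϱ r m ε hb hσ hϱ hr h hcont f₁ f₁' f₁'' f₂ f₂' f₂'' hf₁ hf₂ x hx)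
    (hjb_le b σ ϱ r m ε hb hσ hϱ hr h hcont f₂ f₂' f₂'' f₁ f₁' f₁'' hf₂ hf₁ x hx)
end

section
/- There exists a constant C > 0 such that for every ε ∈ (0,∞) and every x ∈ [0,b], if f_ε is a C² solution of HJB(ε) and f₀ is a C² solution of HJB(0), then f₀(x) ≤ f_ε(x) ≤ f₀(x) + C·ε; that is, f_ε converges to the risk-neutral solution f₀ uniformly on [0,b] with rate O(ε) as ε → 0. -/
open Set

open Filter Topology

section Aux

variable {b σ ϱ r m ε : ℝ} {h f f' f'' : ℝ → ℝ}

/-- first derivative is nonnegative on `[0,b]`. -/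
lemma sol_f'_nonneg (hr : 0 < r) (S : IsHJBSolution b σ ϱ r m ε h f f' f'') :
    ∀ x ∈ Icc (0:ℝ) b, 0 ≤ f' x := by
  intro x hx
  rcases eq_or_lt_of_le hx.1 with h0 | h0
  · rw [← h0, S.2.2.2.2.1]
  rcases eq_or_lt_of_le hx.2 with hb | hb
  · rw [hb, S.2.2.2.2.2]; exact hr.le
  have e := S.2.2.2.1 x ⟨h0, hb⟩
  have : (0:ℝ) ≤ min (min (f'' x + Hfun σ ϱ m ε h x (f x) (f' x)) (f' x)) (r - f' x) := e.ge
  have h1 := (le_min_iff.1 this).1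
  exact (le_min_iff.1 h1).2

lemma sol_f'_le_r (hr : 0 < r) (S : IsHJBSolution b σ ϱ r m ε h f f' f'') :
    ∀ x ∈ Icc (0:ℝ) b, f' x ≤ r := by
  intro x hx
  rcases eq_or_lt_of_le hx.1 with h0 | h0
  · rw [← h0, S.2.2.2.2.1]; exact hr.le
  rcases eq_or_lt_of_le hx.2 with hb | hb
  · rw [hb, S.2.2.2.2.2]
  have e := S.2.2.2.1 x ⟨h0, hb⟩
  have : (0:ℝ) ≤ min (min (f'' x + Hfun σ ϱ m ε h x (f x) (f' x)) (f' x)) (r - f' x) := e.ge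
  have h1 := (le_min_iff.1 this).2
  linarith

lemma sol_cont_f' (S : IsHJBSolution b σ ϱ r m ε h f f' f'') :
    ContinuousOn f' (Icc (0:ℝ) b) :=
  fun x hx => (S.2.1 x hx).continuousWithinAt

lemma sol_cont_f (S : IsHJBSolution b σ ϱ r m ε h f f' f'') :
    ContinuousOn f (Icc (0:ℝ) b) :=
  fun x hx => (S.1 x hx).continuousWithinAt

lemma sol_cont_G (hhc : ContinuousOn h (Icc (0:ℝ) b))
    (S : IsHJBSolution b σ ϱ r m ε h f f' f'') :
    ContinuousOn (fun x => f'' x + Hfun σ ϱ m ε h x (f x) (f' x)) (Icc (0:ℝ) b) := by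
  simp only [Hfun]
  exact S.2.2.1.add (continuousOn_const.mul
    ((((continuousOn_const.mul (sol_cont_f' S)).add
      ((continuousOn_const.mul ((sol_cont_f' S).pow 2)))).sub
      (continuousOn_const.mul (sol_cont_f S))).add hhc))

/-- G ≥ 0 on all of `[0,b]` by continuity. -/
lemma sol_G_nonneg (hb : 0 < b) (hhc : ContinuousOn h (Icc (0:ℝ) b))
    (S : IsHJBSolution b σ ϱ r m ε h f f' f'') :
    ∀ x ∈ Icc (0:ℝ) b, 0 ≤ f'' x + Hfun σ ϱ m ε h x (f x) (f' x) := by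
  intro x hx
  have hIoo : ∀ y ∈ Ioo (0:ℝ) b, 0 ≤ f'' y + Hfun σ ϱ m ε h y (f y) (f' y) := by
    intro y hy
    have e := S.2.2.2.1 y hy
    have : (0:ℝ) ≤ min (min (f'' y + Hfun σ ϱ m ε h y (f y) (f' y)) (f' y)) (r - f' y) := e.ge
    exact (le_min_iff.1 (le_min_iff.1 this).1).1
  have hxc : x ∈ closure (Ioo (0:ℝ) b) := by
    rw [closure_Ioo hb.ne]; exact hx
  have hne : (𝓝[Ioo (0:ℝ) b] x).NeBot := mem_closure_iff_nhdsWithin_neBot.1 hxc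
  have ht : Filter.Tendsto (fun y => f'' y + Hfun σ ϱ m ε h y (f y) (f' y))
      (𝓝[Ioo (0:ℝ) b] x) (𝓝 (f'' x + Hfun σ ϱ m ε h x (f x) (f' x))) :=
    ((sol_cont_G hhc S x hx).mono Ioo_subset_Icc_self).tendsto
  exact ge_of_tendsto ht (eventually_mem_nhdsWithin.mono hIoo)

/-- where `0 < f' < r` in the interior, the equation holds. -/
lemma sol_eq (S : IsHJBSolution b σ ϱ r m ε h f f' f'') {x : ℝ} (hx : x ∈ Ioo (0:ℝ) b)
    (h1 : 0 < f' x) (h2 : f' x < r) :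
    f'' x + Hfun σ ϱ m ε h x (f x) (f' x) = 0 := by
  have e := S.2.2.2.1 x hx
  have hge : (0:ℝ) ≤ f'' x + Hfun σ ϱ m ε h x (f x) (f' x) := by
    have : (0:ℝ) ≤ min (min (f'' x + Hfun σ ϱ m ε h x (f x) (f' x)) (f' x)) (r - f' x) := e.ge
    exact (le_min_iff.1 (le_min_iff.1 this).1).1
  rcases eq_or_lt_of_le hge with heq | hlt
  · exact heq.symm
  · exfalso
    have : (0:ℝ) < min (min (f'' x + Hfun σ ϱ m ε h x (f x) (f' x)) (f' x)) (r - f' x) :=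
      lt_min (lt_min hlt h1) (by linarith)
    rw [e] at this; exact lt_irrefl 0 this

/-- interior zero of `f'` forces `f'' = 0`. -/
lemma sol_f''_zero (hr : 0 < r) (S : IsHJBSolution b σ ϱ r m ε h f f' f'')
    {x : ℝ} (hx : x ∈ Ioo (0:ℝ) b) (h1 : f' x = 0) : f'' x = 0 := by
  have hmem : Icc (0:ℝ) b ∈ 𝓝 x := Icc_mem_nhds hx.1 hx.2
  have hD : HasDerivAt f' (f'' x) x := (S.2.1 x ⟨hx.1.le, hx.2.le⟩).hasDerivAt hmem
  have hmin : IsLocalMin f' x := by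
    filter_upwards [hmem] with y hy
    rw [h1]; exact sol_f'_nonneg hr S y hy
  exact hmin.hasDerivAt_eq_zero hD

/-- `f'' 0 ≥ 0` (left endpoint is a minimum of `f'`). -/
lemma sol_f''0_nonneg (hb : 0 < b) (hr : 0 < r)
    (S : IsHJBSolution b σ ϱ r m ε h f f' f'') : 0 ≤ f'' 0 := by
  have hD := S.2.1 0 ⟨le_rfl, hb.le⟩
  rw [hasDerivWithinAt_iff_tendsto_slope] at hD
  have hne : (𝓝[Icc (0:ℝ) b \ {0}] (0:ℝ)).NeBot := by
    apply mem_closure_iff_nhdsWithin_neBot.1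
    apply closure_mono (show Ioo (0:ℝ) b ⊆ Icc (0:ℝ) b \ {0} by
      intro y hy; exact ⟨⟨hy.1.le, hy.2.le⟩, ne_of_gt hy.1⟩)
    rw [closure_Ioo hb.ne]; exact ⟨le_rfl, hb.le⟩
  refine ge_of_tendsto hD ?_
  filter_upwards [eventually_mem_nhdsWithin] with y hy
  rcases hy with ⟨hy1, hy2⟩
  have hy0 : 0 < y := lt_of_le_of_ne hy1.1 (Ne.symm (by simpa using hy2))
  rw [slope_def_field]
  simp only [S.2.2.2.2.1, sub_zero]
  have := sol_f'_nonneg hr S y hy1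
  positivity


/-- Edge lemma: if `f' c = 0` with `c ∈ [0,b)`, there is `d ∈ [c,b)` with `f' ≡ 0`
on `[c,d]` and the equation holding at `d`. -/
lemma sol_edge (hb : 0 < b) (hr : 0 < r) (hhc : ContinuousOn h (Icc (0:ℝ) b))
    (S : IsHJBSolution b σ ϱ r m ε h f f' f'') {c : ℝ} (hc : c ∈ Ico (0:ℝ) b)
    (hc0 : f' c = 0) :
    ∃ d, c ≤ d ∧ d < b ∧ (∀ y ∈ Icc c d, f' y = 0) ∧
      f'' d + Hfun σ ϱ m ε h d (f d) 0 = 0 := by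
  set T : Set ℝ := {x | x ∈ Icc c b ∧ 0 < f' x} with hT
  have hbT : b ∈ T := ⟨⟨hc.2.le, le_rfl⟩, by rw [S.2.2.2.2.2]; exact hr⟩
  have hTne : T.Nonempty := ⟨b, hbT⟩
  have hbdd : BddBelow T := ⟨c, fun t ht => ht.1.1⟩
  set d := sInf T with hd
  have hcd : c ≤ d := le_csInf hTne fun t ht => ht.1.1
  have hdb : d ≤ b := csInf_le hbdd hbT
  have hdIcc : d ∈ Icc (0:ℝ) b := ⟨hc.1.trans hcd, hdb⟩
  have hflat0 : ∀ y ∈ Ico c d, f' y = 0 := by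
    intro y hy
    have hyIcc : y ∈ Icc (0:ℝ) b := ⟨hc.1.trans hy.1, hy.2.le.trans hdb⟩
    have hyT : y ∉ T := fun hyT => absurd (csInf_le hbdd hyT) (not_le.2 hy.2)
    have h2 : ¬ 0 < f' y := fun hp => hyT ⟨⟨hy.1, hyIcc.2⟩, hp⟩
    exact le_antisymm (not_lt.1 h2) (sol_f'_nonneg hr S y hyIcc)
  have hfd : f' d = 0 := by
    rcases eq_or_lt_of_le hcd with he | hlt
    · rw [← he]; exact hc0
    · have hsub : Ico c d ⊆ Icc (0:ℝ) b := fun y hy =>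
        ⟨hc.1.trans hy.1, hy.2.le.trans hdb⟩
      have hne : (𝓝[Ico c d] d).NeBot := by
        apply mem_closure_iff_nhdsWithin_neBot.1
        rw [closure_Ico hlt.ne]; exact ⟨hlt.le, le_rfl⟩
      have ht1 : Filter.Tendsto f' (𝓝[Ico c d] d) (𝓝 (f' d)) :=
        ((sol_cont_f' S d hdIcc).mono hsub).tendsto
      have ht2 : Filter.Tendsto f' (𝓝[Ico c d] d) (𝓝 0) := by
        refine Filter.Tendsto.congr' ?_ tendsto_const_nhds
        filter_upwards [eventually_mem_nhdsWithin] with y hy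
        exact (hflat0 y hy).symm
      exact tendsto_nhds_unique ht1 ht2
  have hdltb : d < b := by
    rcases eq_or_lt_of_le hdb with he | hlt
    · exfalso; rw [he, S.2.2.2.2.2] at hfd; exact hr.ne' hfd
    · exact hlt
  have hGeq : f'' d + Hfun σ ϱ m ε h d (f d) (f' d) = 0 := by
    by_contra hne'
    have hpos : 0 < f'' d + Hfun σ ϱ m ε h d (f d) (f' d) :=
      lt_of_le_of_ne (sol_G_nonneg hb hhc S d hdIcc) (Ne.symm hne')
    have hcG := (sol_cont_G hhc S d hdIcc).tendsto
    have hev1 : ∀ᶠ x in 𝓝[Icc (0:ℝ) b] d,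
        0 < f'' x + Hfun σ ϱ m ε h x (f x) (f' x) :=
      hcG.eventually (eventually_gt_nhds hpos)
    have hev2 : ∀ᶠ x in 𝓝[Icc (0:ℝ) b] d, f' x < r :=
      ((sol_cont_f' S d hdIcc).tendsto).eventually
        (eventually_lt_nhds (by rw [hfd]; exact hr))
    have hsub : Ioo d b ⊆ Icc (0:ℝ) b := fun y hy =>
      ⟨hdIcc.1.trans hy.1.le, hy.2.le⟩
    have hmono' := nhdsWithin_mono d hsub
    have hev : ∀ᶠ x in 𝓝[Ioo d b] d, f' x = 0 := by
      filter_upwards [hev1.filter_mono hmono', hev2.filter_mono hmono',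
        eventually_mem_nhdsWithin] with x h1 h2 hx
      have hxI : x ∈ Ioo (0:ℝ) b := ⟨lt_of_le_of_lt hdIcc.1 hx.1, hx.2⟩
      have e := S.2.2.2.1 x hxI
      by_contra hfx
      have hfxpos : 0 < f' x :=
        lt_of_le_of_ne (sol_f'_nonneg hr S x ⟨hxI.1.le, hxI.2.le⟩) (Ne.symm hfx)
      have : (0:ℝ) < min (min (f'' x + Hfun σ ϱ m ε h x (f x) (f' x)) (f' x))
          (r - f' x) := lt_min (lt_min h1 hfxpos) (by linarith)
      rw [e] at this; exact lt_irrefl 0 this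
    rw [eventually_nhdsWithin_iff] at hev
    obtain ⟨ι, hι, hball⟩ := Metric.eventually_nhds_iff.mp hev
    set c' := min (d + ι/2) ((d+b)/2) with hc'
    have hdc' : d < c' := lt_min (by linarith) (by linarith)
    obtain ⟨t, htT, htc'⟩ := (csInf_lt_iff hbdd hTne).1 (hdc'.trans_le le_rfl)
    have htd : d ≤ t := csInf_le hbdd htT
    have hpt : 0 < f' t := htT.2
    have htne : t ≠ d := by
      intro e'; rw [e', hfd] at hpt; exact lt_irrefl 0 hpt
    have htb : t < b := by
      have : c' ≤ (d+b)/2 := min_le_right _ _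
      have : t < (d+b)/2 := htc'.trans_le this
      linarith
    have htIoo : t ∈ Ioo d b := ⟨lt_of_le_of_ne htd (Ne.symm htne), htb⟩
    have hdist : dist t d < ι := by
      rw [Real.dist_eq, abs_of_nonneg (by linarith)]
      have h1' : c' ≤ d + ι/2 := min_le_left _ _
      have : t < d + ι/2 := htc'.trans_le h1'
      linarith
    have := hball hdist htIoo
    rw [this] at hpt; exact lt_irrefl 0 hpt
  refine ⟨d, hcd, hdltb, ?_, ?_⟩
  · intro y hy
    rcases eq_or_lt_of_le hy.2 with he | hlt
    · rw [he]; exact hfd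
    · exact hflat0 y ⟨hy.1, hlt⟩
  · rw [hfd] at hGeq; exact hGeq

/-- f is constant on a flat piece. -/
lemma sol_flat_const (S : IsHJBSolution b σ ϱ r m ε h f f' f'') {c d : ℝ}
    (hc : 0 ≤ c) (hdb : d ≤ b) (hcd : c ≤ d) (hflat : ∀ y ∈ Icc c d, f' y = 0) :
    f d = f c := by
  have hcont : ContinuousOn f (Icc c d) :=
    (sol_cont_f S).mono (Icc_subset_Icc hc hdb)
  have hderiv : ∀ x ∈ Ico c d, HasDerivWithinAt f 0 (Ici x) x := by
    intro x hx
    have hxIcc : x ∈ Icc (0:ℝ) b := ⟨hc.trans hx.1, hx.2.le.trans hdb⟩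
    have hmem : Icc (0:ℝ) b ∈ 𝓝[Ici x] x := by
      rw [mem_nhdsWithin]
      refine ⟨Iio b, isOpen_Iio, lt_of_lt_of_le hx.2 hdb, ?_⟩
      intro y hy
      exact ⟨hxIcc.1.trans hy.2, hy.1.le⟩
    have := (S.1 x hxIcc).mono_of_mem_nhdsWithin hmem
    rwa [hflat x ⟨hx.1, hx.2.le⟩] at this
  exact constant_of_has_deriv_right_zero hcont hderiv d ⟨hcd, le_rfl⟩

/-- Wherever `f'` vanishes in the interior, `ϱ f ≥ h`. -/
lemma sol_L_ge (hb : 0 < b) (hσ : 0 < σ) (hr : 0 < r)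
    (hhc : ContinuousOn h (Icc (0:ℝ) b)) (hmono : StrictMonoOn h (Icc (0:ℝ) b))
    (S : IsHJBSolution b σ ϱ r m ε h f f' f'') {c : ℝ} (hc : c ∈ Ioo (0:ℝ) b)
    (hc0 : f' c = 0) : h c ≤ ϱ * f c := by
  obtain ⟨d, hcd, hdb, hflat, hGd⟩ := sol_edge hb hr hhc S ⟨hc.1.le, hc.2⟩ hc0
  have hd0 : 0 < d := lt_of_lt_of_le hc.1 hcd
  have hfd0 : f' d = 0 := hflat d ⟨hcd, le_rfl⟩
  have hf''d : f'' d = 0 := sol_f''_zero hr S ⟨hd0, hdb⟩ hfd0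
  have hσ2 : σ^2 ≠ 0 := by positivity
  have hhd : h d = ϱ * f d := by
    rw [hf''d] at hGd
    simp only [Hfun] at hGd
    field_simp at hGd
    linarith
  have hfc : f d = f c := sol_flat_const S hc.1.le hdb.le hcd hflat
  have hmon : h c ≤ h d := by
    rcases eq_or_lt_of_le hcd with he | hlt
    · rw [he]
    · exact (hmono ⟨hc.1.le, hc.2.le⟩ ⟨hc.1.le.trans hcd, hdb.le⟩ hlt).le
  rw [← hfc]; rw [← hhd]; exact hmon

/-- At the left endpoint: `f'' 0 = (2ϱ/σ²) f 0`. -/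
lemma sol_zero (hb : 0 < b) (hσ : 0 < σ) (hϱ : 0 < ϱ) (hr : 0 < r)
    (hhc : ContinuousOn h (Icc (0:ℝ) b)) (hmono : StrictMonoOn h (Icc (0:ℝ) b))
    (h0 : h 0 = 0) (S : IsHJBSolution b σ ϱ r m ε h f f' f'') :
    f'' 0 = 2/σ^2 * (ϱ * f 0) := by
  obtain ⟨d, hd0, hdb, hflat, hGd⟩ :=
    sol_edge hb hr hhc S (⟨le_rfl, hb⟩ : (0:ℝ) ∈ Ico (0:ℝ) b) S.2.2.2.2.1
  have hσ2 : σ^2 ≠ 0 := by positivity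
  rcases eq_or_lt_of_le hd0 with he | hdpos
  · -- d = 0 : the equation holds at 0
    rw [← he] at hGd
    simp only [Hfun, h0] at hGd
    linear_combination hGd
  · -- d > 0 is impossible
    exfalso
    set y := d/2 with hy
    have hyIoo : y ∈ Ioo (0:ℝ) b := ⟨by positivity, by rw [hy]; linarith⟩
    have hyIcc : y ∈ Icc (0:ℝ) d := ⟨by positivity, by rw [hy]; linarith⟩
    have hfy : f' y = 0 := hflat y hyIcc
    have hf''y : f'' y = 0 := sol_f''_zero hr S hyIoo hfy
    have hGy := sol_G_nonneg hb hhc S y ⟨hyIoo.1.le, hyIoo.2.le⟩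
    rw [hf''y, hfy] at hGy
    simp only [Hfun] at hGy
    have h2σ : 0 < 2/σ^2 := by positivity
    have hy1 : ϱ * f y ≤ h y := by nlinarith
    have hfd0 : f' d = 0 := hflat d ⟨hd0, le_rfl⟩
    have hf''d : f'' d = 0 := sol_f''_zero hr S ⟨hdpos, hdb⟩ hfd0
    have hhd : h d = ϱ * f d := by
      rw [hf''d] at hGd
      simp only [Hfun] at hGd
      field_simp at hGd
      linarith
    have hfyd : f d = f y := by
      have h1 := sol_flat_const S (le_refl 0) hdb.le hd0 hflat
      have h2 : f y = f 0 := by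
        apply sol_flat_const S (le_refl 0) (hyIoo.2.le) hyIcc.1
        intro z hz
        exact hflat z ⟨hz.1, hz.2.trans hyIcc.2⟩
      rw [h1, h2]
    have hlt : h y < h d :=
      hmono ⟨hyIoo.1.le, hyIoo.2.le⟩ ⟨hd0, hdb.le⟩ (by rw [hy]; linarith)
    rw [hhd, hfyd] at hlt
    linarith

end Aux

/-- At a maximum point `x₀ ∈ [0,b)` with vanishing first derivative,
the second derivative is nonpositive. -/
lemma max_second_deriv_nonpos {b : ℝ} {ψ ψ' ψ'' : ℝ → ℝ}
    (hψ : ∀ x ∈ Icc (0:ℝ) b, HasDerivWithinAt ψ (ψ' x) (Icc (0:ℝ) b) x)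
    (hψ2 : ∀ x ∈ Icc (0:ℝ) b, HasDerivWithinAt ψ' (ψ'' x) (Icc (0:ℝ) b) x)
    {x₀ : ℝ} (hx₀ : x₀ ∈ Ico (0:ℝ) b) (hmax : ∀ x ∈ Icc (0:ℝ) b, ψ x ≤ ψ x₀)
    (hd : ψ' x₀ = 0) : ψ'' x₀ ≤ 0 := by
  by_contra hpos'
  have hpos : 0 < ψ'' x₀ := not_le.1 hpos'
  have hD := hψ2 x₀ ⟨hx₀.1, hx₀.2.le⟩
  rw [hasDerivWithinAt_iff_tendsto_slope] at hD
  have hmono' : 𝓝[Ioc x₀ b] x₀ ≤ 𝓝[Icc (0:ℝ) b \ {x₀}] x₀ :=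
    nhdsWithin_mono _ (fun y hy => ⟨⟨hx₀.1.trans hy.1.le, hy.2⟩, ne_of_gt hy.1⟩)
  have hev : ∀ᶠ y in 𝓝[Ioc x₀ b] x₀, 0 < slope ψ' x₀ y :=
    (hD.mono_left hmono').eventually (eventually_gt_nhds hpos)
  have hev' : ∀ᶠ y in 𝓝[Ioc x₀ b] x₀, 0 < ψ' y := by
    filter_upwards [hev, eventually_mem_nhdsWithin] with y hy hymem
    rw [slope_def_field, hd, sub_zero] at hy
    have hyx : 0 < y - x₀ := by have := hymem.1; linarith
    have := mul_pos hy hyx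
    rw [div_mul_cancel₀] at this
    · exact this
    · exact ne_of_gt hyx
  rw [eventually_nhdsWithin_iff] at hev'
  obtain ⟨ι, hι, hball⟩ := Metric.eventually_nhds_iff.mp hev'
  set c := min (x₀ + ι/2) ((x₀+b)/2) with hc
  have hx₀c : x₀ < c := lt_min (by linarith) (by have := hx₀.2; linarith)
  have hcb : c < b := by
    have h1 : c ≤ (x₀+b)/2 := min_le_right _ _
    have := hx₀.2; linarith
  have hcb' : c ≤ b := hcb.le
  have hmonoψ : StrictMonoOn ψ (Icc x₀ c) := by
    apply strictMonoOn_of_deriv_pos (convex_Icc _ _)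
    · exact ContinuousOn.mono (fun x hx => (hψ x hx).continuousWithinAt)
        (Icc_subset_Icc hx₀.1 hcb')
    · intro x hx
      rw [interior_Icc] at hx
      have hxIcc : x ∈ Icc (0:ℝ) b := ⟨hx₀.1.trans hx.1.le, (hx.2.le.trans hcb')⟩
      have hxlt : x < b := lt_of_lt_of_le hx.2 hcb'
      have hDx : HasDerivAt ψ (ψ' x) x :=
        (hψ x hxIcc).hasDerivAt (Icc_mem_nhds (lt_of_le_of_lt hx₀.1 hx.1) hxlt)
      rw [hDx.deriv]
      apply hball
      · rw [Real.dist_eq, abs_of_nonneg (by linarith [hx.1])]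
        have : c ≤ x₀ + ι/2 := min_le_left _ _
        linarith [hx.2]
      · exact ⟨hx.1, hxlt.le⟩
  have hlt : ψ x₀ < ψ c :=
    hmonoψ ⟨le_rfl, hx₀c.le⟩ ⟨hx₀c.le, le_rfl⟩ hx₀c
  have := hmax c ⟨hx₀.1.trans hx₀c.le, hcb'⟩
  linarith

/-- At a maximum at the right endpoint, the (within) derivative is nonnegative. -/
lemma max_right_deriv_nonneg {b : ℝ} (hb : 0 < b) {ψ ψ' : ℝ → ℝ}
    (hψ : ∀ x ∈ Icc (0:ℝ) b, HasDerivWithinAt ψ (ψ' x) (Icc (0:ℝ) b) x)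
    (hmax : ∀ x ∈ Icc (0:ℝ) b, ψ x ≤ ψ b) : 0 ≤ ψ' b := by
  have hD := hψ b ⟨hb.le, le_rfl⟩
  rw [hasDerivWithinAt_iff_tendsto_slope] at hD
  have hne : (𝓝[Icc (0:ℝ) b \ {b}] b).NeBot := by
    apply mem_closure_iff_nhdsWithin_neBot.1
    apply closure_mono (show Ico (0:ℝ) b ⊆ Icc (0:ℝ) b \ {b} by
      intro y hy; exact ⟨⟨hy.1, hy.2.le⟩, ne_of_lt hy.2⟩)
    rw [closure_Ico hb.ne]; exact ⟨hb.le, le_rfl⟩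
  refine ge_of_tendsto hD ?_
  filter_upwards [eventually_mem_nhdsWithin] with y hy
  rcases hy with ⟨hy1, hy2⟩
  have hyb : y < b := lt_of_le_of_ne hy1.2 (by simpa using hy2)
  rw [slope_def_field]
  have h1 : ψ y - ψ b ≤ 0 := by linarith [hmax y hy1]
  have h2 : y - b < 0 := by linarith
  have := div_nonneg (neg_nonneg.2 h1) (neg_nonneg.2 h2.le)
  rw [neg_div_neg_eq] at this
  exact this


section Cmp
variable {b σ ϱ r m : ℝ} {h : ℝ → ℝ}

set_option maxHeartbeats 2000000 in
/-- The comparison principle. -/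
lemma cmp_sol (hb : 0 < b) (hσ : 0 < σ) (hϱ : 0 < ϱ) (hr : 0 < r)
    (hhc : ContinuousOn h (Icc (0:ℝ) b)) (hmono : StrictMonoOn h (Icc (0:ℝ) b))
    (h0 : h 0 = 0) {εu εv : ℝ} (hεu : 0 ≤ εu) (hεv : 0 ≤ εv)
    {u u' u'' v v' v'' : ℝ → ℝ}
    (Su : IsHJBSolution b σ ϱ r m εu h u u' u'')
    (Sv : IsHJBSolution b σ ϱ r m εv h v v' v'') :
    ∀ x ∈ Icc (0:ℝ) b, u x ≤ v x + σ^2 * εu * r^2 / (2*ϱ) := by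
  have hσ2 : (0:ℝ) < σ^2 := by positivity
  have habs : (0:ℝ) ≤ (abs m) := abs_nonneg m
  set δ := σ^2 * εu * r^2 / (2*ϱ) with hδdef
  have hδ0 : 0 ≤ δ := by positivity
  have hδ : 2 * ϱ * δ = σ^2 * εu * r^2 := by rw [hδdef]; field_simp
  set K := (2*σ^2 + 2*(abs m)*b + 2*σ^2*εu*b^2 + σ^2 + 1)/ϱ with hKdef
  have hK0 : 0 < K := by positivity
  have hKϱ : ϱ * K = 2*σ^2 + 2*(abs m)*b + 2*σ^2*εu*b^2 + σ^2 + 1 := by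
    rw [hKdef]; field_simp
  have key : ∀ η : ℝ, 0 < η → η ≤ 1 → 2*η*b < r →
      ∀ x ∈ Icc (0:ℝ) b, u x - (v x + δ + η*x^2) ≤ K*η := by
    intro η hη hη1 hηr
    set ψ : ℝ → ℝ := fun x => u x - (v x + δ + η*x^2) with hψdef
    set ψ' : ℝ → ℝ := fun x => u' x - (v' x + η*(2*x)) with hψ'def
    set ψ'' : ℝ → ℝ := fun x => u'' x - (v'' x + η*2) with hψ''def
    have hψD : ∀ x ∈ Icc (0:ℝ) b, HasDerivWithinAt ψ (ψ' x) (Icc (0:ℝ) b) x := by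
      intro x hx
      have hq : HasDerivAt (fun y : ℝ => η*y^2) (η*(2*x)) x := by
        have := (hasDerivAt_pow 2 x).const_mul η
        simpa using this
      exact (Su.1 x hx).sub (((Sv.1 x hx).add_const δ).add hq.hasDerivWithinAt)
    have hψD2 : ∀ x ∈ Icc (0:ℝ) b, HasDerivWithinAt ψ' (ψ'' x) (Icc (0:ℝ) b) x := by
      intro x hx
      have hq : HasDerivAt (fun y : ℝ => η*(2*y)) (η*2) x := by
        have := ((hasDerivAt_id x).const_mul (2:ℝ)).const_mul η
        simpa using this
      exact (Su.2.1 x hx).sub ((Sv.2.1 x hx).add hq.hasDerivWithinAt)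
    have hψc : ContinuousOn ψ (Icc (0:ℝ) b) :=
      fun x hx => (hψD x hx).continuousWithinAt
    obtain ⟨x₀, hx₀, hmax'⟩ :=
      isCompact_Icc.exists_isMaxOn ⟨0, left_mem_Icc.2 hb.le⟩ hψc
    have hmax : ∀ x ∈ Icc (0:ℝ) b, ψ x ≤ ψ x₀ := fun x hx => hmax' hx
    suffices hM : ψ x₀ ≤ K*η by
      intro x hx
      have := (hmax x hx).trans hM
      simpa [hψdef] using this
    have hx₀b : x₀ ≠ b := by
      intro he
      have h1 : 0 ≤ ψ' b := max_right_deriv_nonneg hb hψD (he ▸ hmax)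
      have h2 : ψ' b = -(η*(2*b)) := by
        simp only [hψ'def, Su.2.2.2.2.2, Sv.2.2.2.2.2]; ring
      rw [h2] at h1; linarith only [h1, mul_pos hη hb]
    have hx₀Ico : x₀ ∈ Ico (0:ℝ) b := ⟨hx₀.1, lt_of_le_of_ne hx₀.2 hx₀b⟩
    have hd1 : ψ' x₀ = 0 := by
      rcases eq_or_lt_of_le hx₀.1 with h00 | h00
      · simp only [hψ'def, ← h00, Su.2.2.2.2.1, Sv.2.2.2.2.1]; ring
      · have hmem : Icc (0:ℝ) b ∈ 𝓝 x₀ := Icc_mem_nhds h00 hx₀Ico.2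
        have hlm : IsLocalMax ψ x₀ := by
          filter_upwards [hmem] with y hy; exact hmax y hy
        exact hlm.hasDerivAt_eq_zero ((hψD x₀ hx₀).hasDerivAt hmem)
    have hd2 : ψ'' x₀ ≤ 0 := max_second_deriv_nonpos hψD hψD2 hx₀Ico hmax hd1
    have hu'v' : u' x₀ = v' x₀ + 2*η*x₀ := by
      have := hd1; simp only [hψ'def] at this; linarith
    have hu''v'' : u'' x₀ ≤ v'' x₀ + 2*η := by
      have := hd2; simp only [hψ''def] at this; linarith
    have hψx₀ : ψ x₀ = u x₀ - v x₀ - δ - η*x₀^2 := by simp only [hψdef]; ring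
    have hx₀0 : (0:ℝ) ≤ x₀ := hx₀.1
    have hx₀le : x₀ ≤ b := hx₀.2
    have hmabs1 : m ≤ (abs m) := le_abs_self m
    have hmabs2 : -(abs m) ≤ m := neg_abs_le m
    -- final division step helper
    have hdiv : ϱ * (ψ x₀) ≤ ϱ * (K*η) → ψ x₀ ≤ K*η :=
      fun hfin => le_of_mul_le_mul_left hfin hϱ
    have hKη : ϱ * (K*η) = (2*σ^2 + 2*(abs m)*b + 2*σ^2*εu*b^2 + σ^2 + 1)*η := by
      rw [← hKϱ]; ring
    have hδϱ : 0 ≤ ϱ * δ := mul_nonneg hϱ.le hδ0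
    have hp1 : 0 ≤ (abs m)*b*η := by positivity
    have hp2 : 0 ≤ σ^2*εu*b^2*η := by positivity
    have hp3 : 0 ≤ σ^2*η := by positivity
    rcases eq_or_lt_of_le hx₀.1 with h00 | h00
    · -- x₀ = 0
      subst h00
      have hu0 := sol_zero hb hσ hϱ hr hhc hmono h0 Su
      have hv0 := sol_zero hb hσ hϱ hr hhc hmono h0 Sv
      have hA : σ^2 * u'' 0 = 2*(ϱ * u 0) := by rw [hu0]; field_simp
      have hB : σ^2 * v'' 0 = 2*(ϱ * v 0) := by rw [hv0]; field_simp
      have hC : σ^2 * u'' 0 ≤ σ^2 * (v'' 0 + 2*η) :=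
        mul_le_mul_of_nonneg_left hu''v'' hσ2.le
      apply hdiv
      rw [hψx₀, hKη]
      linarith only [hA, hB, hC, hδϱ, hp1, hp2, hp3, hη.le]
    have hx₀Ioo : x₀ ∈ Ioo (0:ℝ) b := ⟨h00, hx₀Ico.2⟩
    have hv'0 : 0 ≤ v' x₀ := sol_f'_nonneg hr Sv x₀ hx₀
    have hv'r : v' x₀ ≤ r := sol_f'_le_r hr Sv x₀ hx₀
    have hu'0 : 0 ≤ u' x₀ := sol_f'_nonneg hr Su x₀ hx₀
    have hu'r : u' x₀ ≤ r := sol_f'_le_r hr Su x₀ hx₀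
    have hη2 : η^2 ≤ η := by rw [sq]; simpa using mul_le_mul_of_nonneg_left hη1 hη.le
    have hx2 : x₀^2 ≤ b^2 := pow_le_pow_left₀ hx₀0 hx₀le 2
    rcases eq_or_lt_of_le hv'0 with hv0 | hv0
    · -- Case B : v' x₀ = 0
      have hz : u' x₀ = 2*η*x₀ := by rw [hu'v', ← hv0]; ring
      have hz0 : 0 < u' x₀ := by rw [hz]; positivity
      have hzr : u' x₀ < r := by
        rw [hz]
        have := mul_le_mul_of_nonneg_left hx₀le (by positivity : (0:ℝ) ≤ 2*η)
        linarith only [this, hηr]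
      have hequ := sol_eq Su hx₀Ioo hz0 hzr
      have hv''0 : v'' x₀ = 0 := sol_f''_zero hr Sv hx₀Ioo hv0.symm
      have hLv : h x₀ ≤ ϱ * v x₀ := sol_L_ge hb hσ hr hhc hmono Sv hx₀Ioo hv0.symm
      rw [hz] at hequ
      have hEu : σ^2 * u'' x₀ + 2*(m * (2*η*x₀)) + σ^2*εu*(2*η*x₀)^2
          - 2*(ϱ * u x₀) + 2*(h x₀) = 0 := by
        simp only [Hfun] at hequ; field_simp at hequ; linarith only [hequ]
      have t1 : m*(2*η*x₀) ≤ (abs m)*(2*η*x₀) :=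
        mul_le_mul_of_nonneg_right hmabs1 (by positivity)
      have t2 : (abs m)*(2*η*x₀) ≤ (abs m)*(2*η*b) :=
        mul_le_mul_of_nonneg_left (by
          have := mul_le_mul_of_nonneg_left hx₀le (by positivity : (0:ℝ) ≤ 2*η)
          linarith only [this]) habs
      have t3 : (2*η*x₀)^2 ≤ 4*η*b^2 := by
        have e1 := mul_le_mul_of_nonneg_right hη2 (sq_nonneg x₀)
        have e2 := mul_le_mul_of_nonneg_left hx2 hη.le
        have e3 : (2*η*x₀)^2 = 4*(η^2*x₀^2) := by ring
        rw [e3]; linarith only [e1, e2]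
      have t4 : σ^2*εu*(2*η*x₀)^2 ≤ σ^2*εu*(4*η*b^2) :=
        mul_le_mul_of_nonneg_left t3 (by positivity)
      have hv''σ : σ^2 * v'' x₀ = 0 := by rw [hv''0]; ring
      have hC : σ^2 * u'' x₀ ≤ σ^2 * (v'' x₀ + 2*η) :=
        mul_le_mul_of_nonneg_left hu''v'' hσ2.le
      apply hdiv
      rw [hψx₀, hKη]
      have hηx : 0 ≤ ϱ * (η*x₀^2) := by positivity
      linarith only [hEu, t1, t2, t4, hC, hv''σ, hLv, hηx, hp3, hη.le, hδϱ]
    rcases eq_or_lt_of_le hv'r with hvr | hvr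
    · -- v' x₀ = r : impossible
      exfalso; rw [hvr] at hu'v'; linarith only [hu'v', hu'r, mul_pos hη h00]
    · -- Case A : 0 < v' x₀ < r
      have hEv := sol_eq Sv hx₀Ioo hv0 hvr
      have hGu := sol_G_nonneg hb hhc Su x₀ hx₀
      have hEv' : σ^2 * v'' x₀ + 2*(m * v' x₀) + σ^2*εv*(v' x₀)^2
          - 2*(ϱ * v x₀) + 2*(h x₀) = 0 := by
        simp only [Hfun] at hEv; field_simp at hEv; linarith only [hEv]
      have hid : σ^2 * (u'' x₀ + Hfun σ ϱ m εu h x₀ (u x₀) (u' x₀))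
          = σ^2 * u'' x₀ + 2*(m * u' x₀) + σ^2*εu*(u' x₀)^2
            - 2*(ϱ * u x₀) + 2*(h x₀) := by
        simp only [Hfun]; field_simp; ring
      have hGu' : 0 ≤ σ^2 * u'' x₀ + 2*(m * u' x₀) + σ^2*εu*(u' x₀)^2
          - 2*(ϱ * u x₀) + 2*(h x₀) := by
        have h2 := mul_le_mul_of_nonneg_left hGu hσ2.le
        rw [mul_zero, hid] at h2; exact h2
      have hmu : m*(u' x₀) = m*(v' x₀) + m*(2*η*x₀) := by rw [hu'v']; ring
      have t1 : m*(2*η*x₀) ≤ (abs m)*(2*η*x₀) :=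
        mul_le_mul_of_nonneg_right hmabs1 (by positivity)
      have t2 : (abs m)*(2*η*x₀) ≤ (abs m)*(2*η*b) :=
        mul_le_mul_of_nonneg_left (by
          have := mul_le_mul_of_nonneg_left hx₀le (by positivity : (0:ℝ) ≤ 2*η)
          linarith only [this]) habs
      have t5 : σ^2*εu*(u' x₀)^2 ≤ σ^2*εu*r^2 :=
        mul_le_mul_of_nonneg_left (pow_le_pow_left₀ hu'0 hu'r 2) (by positivity)
      have t6 : 0 ≤ σ^2*εv*(v' x₀)^2 := by positivity
      have hC : σ^2 * u'' x₀ ≤ σ^2 * (v'' x₀ + 2*η) :=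
        mul_le_mul_of_nonneg_left hu''v'' hσ2.le
      apply hdiv
      rw [hψx₀, hKη]
      have hηx : 0 ≤ ϱ * (η*x₀^2) := by positivity
      linarith only [hEv', hGu', hmu, t1, t2, t5, t6, hC, hδ, hηx, hp2, hp3, hη.le]
  -- conclude from `key` by letting η → 0
  intro x hx
  by_contra hlt
  push_neg at hlt
  set κ := u x - (v x + δ) with hκdef
  have hκ0 : 0 < κ := by simp only [hκdef]; linarith only [hlt]
  have hb2K : (0:ℝ) < b^2+K+1 := by positivity
  set η := min (min 1 (r/(2*b+1))) (κ/(b^2+K+1)) with hηdef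
  have hη0 : 0 < η :=
    lt_min (lt_min one_pos (by positivity)) (by positivity)
  have hη1 : η ≤ 1 := (min_le_left _ _).trans (min_le_left _ _)
  have hb1 : (0:ℝ) < 2*b+1 := by linarith
  have hηr : 2*η*b < r := by
    have h1 : η ≤ r/(2*b+1) := (min_le_left _ _).trans (min_le_right _ _)
    have h2 : 2*η*b ≤ 2*(r/(2*b+1))*b := by
      have := mul_le_mul_of_nonneg_right h1 (by positivity : (0:ℝ) ≤ 2*b)
      linarith only [this]
    have h3 : 2*(r/(2*b+1))*b < r := by
      have he : 2*(r/(2*b+1))*b = (2*b)*r/(2*b+1) := by ring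
      rw [he, div_lt_iff₀ hb1]
      linarith only [hr, mul_pos hr hb]
    linarith
  have hkey := key η hη0 hη1 hηr x hx
  have hηκ : η ≤ κ/(b^2+K+1) := min_le_right _ _
  have hx2 : x^2 ≤ b^2 := pow_le_pow_left₀ hx.1 hx.2 2
  have h4 : κ ≤ η*(x^2 + K) := by simp only [hκdef]; nlinarith [hkey]
  have h5 : η*(x^2+K) ≤ η*(b^2+K) :=
    mul_le_mul_of_nonneg_left (by linarith) hη0.le
  have h6 : η*(b^2+K) ≤ (κ/(b^2+K+1))*(b^2+K) :=
    mul_le_mul_of_nonneg_right hηκ (by positivity)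
  have h7 : (κ/(b^2+K+1))*(b^2+K) < κ := by
    rw [div_mul_eq_mul_div, div_lt_iff₀ hb2K]
    linarith only [hκ0]
  clear_value κ η K δ
  linarith only [h4, h5, h6, h7]
end Cmp

/-- There exists C > 0 such that for every ε ∈ (0,∞) and every
x ∈ [0,b], if f_ε is a C² solution of HJB(ε) and f₀ is a C² solution of HJB(0),
then f₀(x) ≤ f_ε(x) ≤ f₀(x) + C·ε. -/
theorem stmt17 (b σ ϱ r m : ℝ) (hb : 0 < b) (hσ : 0 < σ) (hϱ : 0 < ϱ) (hr : 0 < r)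
    (h : ℝ → ℝ)
    (hLip : ∃ K : NNReal, LipschitzOnWith K h (Icc (0:ℝ) b))
    (hconv : ConvexOn ℝ (Icc (0:ℝ) b) h)
    (hmono : StrictMonoOn h (Icc (0:ℝ) b)) (h0 : h 0 = 0) :
    ∃ C > (0:ℝ), ∀ ε > (0:ℝ), ∀ fe fe' fe'' f0 f0' f0'' : ℝ → ℝ,
      IsHJBSolution b σ ϱ r m ε h fe fe' fe'' →
      IsHJBSolution b σ ϱ r m 0 h f0 f0' f0'' →
      ∀ x ∈ Icc (0:ℝ) b, f0 x ≤ fe x ∧ fe x ≤ f0 x + C * ε := by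
  obtain ⟨Kl, hKl⟩ := hLip
  have hhc : ContinuousOn h (Icc (0:ℝ) b) := hKl.continuousOn
  refine ⟨σ^2 * r^2 / (2*ϱ), by positivity, ?_⟩
  intro ε hε fe fe' fe'' f0 f0' f0'' Se S0 x hx
  constructor
  · have := cmp_sol hb hσ hϱ hr hhc hmono h0 (le_refl (0:ℝ)) hε.le S0 Se x hx
    simpa using this
  · have := cmp_sol hb hσ hϱ hr hhc hmono h0 hε.le (le_refl (0:ℝ)) Se S0 x hx
    have he : σ^2 * ε * r^2 / (2*ϱ) = σ^2 * r^2 / (2*ϱ) * ε := by ring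
    rw [he] at this
    exact this
end

section
/- The solutions f_ε diverge uniformly as the ambiguity parameter grows: for every M > 0 there exists E > 0 such that for every ε > E and every C² solution f_ε of HJB(ε), one has f_ε(x) ≥ M for all x ∈ [0,b]. -/
open Set

/-- The solutions f_ε diverge uniformly as the ambiguity parameter
grows: for every M > 0 there exists E > 0 such that for every ε > E and every C²
solution f_ε of HJB(ε), one has f_ε(x) ≥ M for all x ∈ [0,b]. -/
theorem stmt18 (b σ ϱ r m : ℝ) (hb : 0 < b) (hσ : 0 < σ) (hϱ : 0 < ϱ) (hr : 0 < r)
    (h : ℝ → ℝ)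
    (hLip : ∃ K : NNReal, LipschitzOnWith K h (Icc (0:ℝ) b))
    (hconv : ConvexOn ℝ (Icc (0:ℝ) b) h)
    (hmono : StrictMonoOn h (Icc (0:ℝ) b)) (h0 : h 0 = 0) :
    ∀ M > (0:ℝ), ∃ E > (0:ℝ), ∀ ε > E, ∀ fe fe' fe'' : ℝ → ℝ,
      IsHJBSolution b σ ϱ r m ε h fe fe' fe'' →
      ∀ x ∈ Icc (0:ℝ) b, M ≤ fe x := by
  intro M hM
  refine ⟨(ϱ*(M + r*b) + |m| * r / 2 + 1) * (8/(σ^2*r^2)), by positivity, ?_⟩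
  intro ε hε fe fe' fe'' hsol x hx
  obtain ⟨hf, hf', -, hmin, hd0, hdb⟩ := hsol
  have hcont' : ContinuousOn fe' (Icc 0 b) := fun y hy => (hf' y hy).continuousWithinAt
  -- bounds on fe'
  have hbound : ∀ y ∈ Icc (0:ℝ) b, 0 ≤ fe' y ∧ fe' y ≤ r := by
    intro y hy
    rcases eq_or_lt_of_le hy.1 with h0y | h0y
    · rw [← h0y, hd0]; exact ⟨le_rfl, hr.le⟩
    rcases eq_or_lt_of_le hy.2 with hyb | hyb
    · rw [hyb, hdb]; exact ⟨hr.le, le_rfl⟩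
    have hm := hmin y ⟨h0y, hyb⟩
    have h1 : min (min (fe'' y + Hfun σ ϱ m ε h y (fe y) (fe' y)) (fe' y)) (r - fe' y)
        ≤ fe' y := (min_le_left _ _).trans (min_le_right _ _)
    have h2 : min (min (fe'' y + Hfun σ ϱ m ε h y (fe y) (fe' y)) (fe' y)) (r - fe' y)
        ≤ r - fe' y := min_le_right _ _
    rw [hm] at h1 h2
    exact ⟨h1, by linarith⟩
  -- IVT: exists point where fe' = r/2
  have hmem : r/2 ∈ Icc (fe' 0) (fe' b) := by
    rw [hd0, hdb]; constructor <;> linarith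
  obtain ⟨x₁, hx₁I, hx₁⟩ := intermediate_value_Icc hb.le hcont' hmem
  -- the last such point
  set S : Set ℝ := Icc 0 b ∩ fe' ⁻¹' {r/2} with hSdef
  have hSclosed : IsClosed S :=
    hcont'.preimage_isClosed_of_isClosed isClosed_Icc isClosed_singleton
  have hScomp : IsCompact S :=
    isCompact_Icc.of_isClosed_subset hSclosed inter_subset_left
  have hSne : S.Nonempty := ⟨x₁, hx₁I, by simpa using hx₁⟩
  set x₀ := sSup S with hx₀def
  have hx₀S : x₀ ∈ S := hScomp.sSup_mem hSne
  have hx₀I : x₀ ∈ Icc (0:ℝ) b := hx₀S.1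
  have hx₀v : fe' x₀ = r/2 := by simpa using hx₀S.2
  have hx₀0 : 0 < x₀ := by
    rcases eq_or_lt_of_le hx₀I.1 with h' | h'
    · exfalso; rw [← h', hd0] at hx₀v; linarith
    · exact h'
  have hx₀b : x₀ < b := by
    rcases eq_or_lt_of_le hx₀I.2 with h' | h'
    · exfalso; rw [h', hdb] at hx₀v; linarith
    · exact h'
  -- beyond x₀, fe' > r/2
  have hgt : ∀ y ∈ Ioc x₀ b, r/2 < fe' y := by
    intro y hy
    by_contra hle; push_neg at hle
    have hy0 : (0:ℝ) ≤ y := le_trans hx₀I.1 hy.1.le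
    have hsub : Icc y b ⊆ Icc (0:ℝ) b := Icc_subset_Icc hy0 le_rfl
    have hmem2 : r/2 ∈ Icc (fe' y) (fe' b) := by
      rw [hdb]; exact ⟨hle, by linarith⟩
    obtain ⟨z, hzI, hz⟩ := intermediate_value_Icc hy.2 (hcont'.mono hsub) hmem2
    have hzS : z ∈ S := ⟨hsub hzI, by simpa using hz⟩
    have h1 : z ≤ x₀ := le_csSup hScomp.bddAbove hzS
    have h2 : y ≤ z := hzI.1
    linarith [hy.1]
  -- fe'' x₀ ≥ 0
  have hsub2 : Ioc x₀ b ⊆ Icc (0:ℝ) b := fun z hz => ⟨le_trans hx₀I.1 hz.1.le, hz.2⟩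
  have hdmono : HasDerivWithinAt fe' (fe'' x₀) (Ioc x₀ b) x₀ := (hf' x₀ hx₀I).mono hsub2
  rw [hasDerivWithinAt_iff_tendsto_slope] at hdmono
  have hdiff : Ioc x₀ b \ {x₀} = Ioc x₀ b :=
    Set.diff_singleton_eq_self (fun hc => lt_irrefl x₀ hc.1)
  rw [hdiff, nhdsWithin_Ioc_eq_nhdsGT hx₀b] at hdmono
  have hIocmem : Ioc x₀ b ∈ nhdsWithin x₀ (Ioi x₀) := Ioc_mem_nhdsGT_of_mem ⟨le_rfl, hx₀b⟩
  have hslope : ∀ᶠ y in nhdsWithin x₀ (Ioi x₀), 0 ≤ slope fe' x₀ y := by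
    filter_upwards [hIocmem] with y hy
    have h1 := hgt y hy
    rw [slope_def_field]
    apply div_nonneg <;> [skip; skip]
    · rw [hx₀v]; linarith
    · linarith [hy.1]
  have hf''0 : 0 ≤ fe'' x₀ := ge_of_tendsto hdmono hslope
  -- the equation at x₀
  have hm := hmin x₀ ⟨hx₀0, hx₀b⟩
  have hAge : 0 ≤ fe'' x₀ + Hfun σ ϱ m ε h x₀ (fe x₀) (fe' x₀) := by
    have h1 : min (min (fe'' x₀ + Hfun σ ϱ m ε h x₀ (fe x₀) (fe' x₀)) (fe' x₀)) (r - fe' x₀)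
        ≤ fe'' x₀ + Hfun σ ϱ m ε h x₀ (fe x₀) (fe' x₀) :=
      (min_le_left _ _).trans (min_le_left _ _)
    rw [hm] at h1; exact h1
  have hAeq : fe'' x₀ + Hfun σ ϱ m ε h x₀ (fe x₀) (fe' x₀) = 0 := by
    by_contra hne
    have hApos : 0 < fe'' x₀ + Hfun σ ϱ m ε h x₀ (fe x₀) (fe' x₀) :=
      lt_of_le_of_ne hAge (Ne.symm hne)
    have hB : 0 < fe' x₀ := by rw [hx₀v]; linarith
    have hC : 0 < r - fe' x₀ := by rw [hx₀v]; linarith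
    have hpos : 0 < min (min (fe'' x₀ + Hfun σ ϱ m ε h x₀ (fe x₀) (fe' x₀)) (fe' x₀))
        (r - fe' x₀) := lt_min (lt_min hApos hB) hC
    rw [hm] at hpos; exact lt_irrefl 0 hpos
  have hH : Hfun σ ϱ m ε h x₀ (fe x₀) (fe' x₀) ≤ 0 := by linarith
  rw [Hfun, hx₀v] at hH
  have hinner : m * (r/2) + 1/2*σ^2*ε*(r/2)^2 - ϱ * fe x₀ + h x₀ ≤ 0 := by
    by_contra hpos; push_neg at hpos
    have h2 : (0:ℝ) < 2/σ^2 := by positivity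
    nlinarith [mul_pos h2 hpos]
  have hh0 : 0 ≤ h x₀ := by
    have h1 : h 0 ≤ h x₀ :=
      hmono.monotoneOn ⟨le_rfl, hb.le⟩ hx₀I hx₀I.1
    linarith [h0 ▸ h1]
  -- Lipschitz bound
  have hnorm : ∀ y ∈ Icc (0:ℝ) b, ‖fe' y‖ ≤ r := by
    intro y hy
    obtain ⟨h1, h2⟩ := hbound y hy
    rw [Real.norm_eq_abs, abs_le]; exact ⟨by linarith, h2⟩
  have hlip := Convex.norm_image_sub_le_of_norm_hasDerivWithin_le hf hnorm
    (convex_Icc _ _) hx hx₀I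
  have hxx : ‖x₀ - x‖ ≤ b := by
    rw [Real.norm_eq_abs, abs_le]
    constructor <;> [linarith [hx₀I.1, hx.2]; linarith [hx₀I.2, hx.1]]
  have hfe : fe x₀ - fe x ≤ r * b := by
    have h1 : fe x₀ - fe x ≤ ‖fe x₀ - fe x‖ := by
      rw [Real.norm_eq_abs]; exact le_abs_self _
    have h2 : r * ‖x₀ - x‖ ≤ r * b := mul_le_mul_of_nonneg_left hxx hr.le
    linarith
  -- arithmetic
  have hεbig : ϱ*(M + r*b) + |m| * r / 2 + 1 < σ^2*r^2/8 * ε := by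
    have hpos : (0:ℝ) < σ^2*r^2/8 := by positivity
    have h1 := mul_lt_mul_of_pos_left hε hpos
    have heq : σ^2*r^2/8 * ((ϱ*(M + r*b) + |m| * r / 2 + 1) * (8/(σ^2*r^2)))
        = ϱ*(M + r*b) + |m| * r / 2 + 1 := by field_simp
    linarith [heq ▸ h1]
  have hmr : -(|m|) * (r/2) ≤ m * (r/2) :=
    mul_le_mul_of_nonneg_right (neg_abs_le m) (by positivity)
  have key : ϱ * (M + r*b) < ϱ * fe x₀ := by nlinarith
  have hfin : M + r*b < fe x₀ := lt_of_mul_lt_mul_left key hϱ.le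
  linarith
end
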